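/- arXiv:1207.6765 — 9 statements merged into one kernel-verified Lean document; each statement's English description precedes it below -/
import Mathlib

section
/- Let Γ be a signed graph of order n with no isolated vertex and with rank(A(Γ)) ≤ 3. Fix any vertex x of Γ, let Y = N(x) be the neighborhood of x and X = V(Γ) \ Y. Then no two vertices of X are adjacent in Γ. -/
/- The adjacency matrix of a signed graph `(G, σ)`: the `(u,v)` entry is `σ u v`
if `uv` is an edge of `G`, and `0` otherwise. -/
open Classical in
noncomputable def signedAdj {V : Type*} (G : SimpleGraph V) (σ : V → V → ℝ) :
    Matrix V V ℝ :=
  Matrix.of fun u v => if G.Adj u v then σ u v else 0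

/-- The sign of a walk: the product of the signs of its edges. -/
def walkSign {V : Type*} {G : SimpleGraph V} (σ : V → V → ℝ) {u v : V}
    (p : G.Walk u v) : ℝ :=
  (p.darts.map fun d => σ d.toProd.1 d.toProd.2).prod

/-- A signed graph is balanced if every cycle is positive. -/
def IsBalanced {V : Type*} (G : SimpleGraph V) (σ : V → V → ℝ) : Prop :=
  ∀ (u : V) (c : G.Walk u u), c.IsCycle → walkSign σ c = 1

private lemma det4_aux (a b c d : ℝ) :
    Matrix.det !![0,a,0,0; a,0,b,c; 0,b,0,d; 0,c,d,0] = a^2*d^2 := by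
  simp [Matrix.det_succ_row_zero, Fin.sum_univ_succ, Fin.succAbove]
  ring

open Classical in
private lemma rank_submatrix_le_aux {V : Type*} [Fintype V]
    (A : Matrix V V ℝ) (f : Fin 4 → V) :
    (A.submatrix f f).rank ≤ A.rank := by
  classical
  let P : Matrix (Fin 4) V ℝ := Matrix.of fun i k => if k = f i then 1 else 0
  let Q : Matrix V (Fin 4) ℝ := Matrix.of fun k j => if k = f j then 1 else 0
  have hPAQ : P * A * Q = A.submatrix f f := by
    ext i j
    simp [P, Q, Matrix.mul_apply, ite_mul, mul_ite, Finset.sum_ite_eq',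
      Finset.sum_ite_eq]
  calc (A.submatrix f f).rank = (P * A * Q).rank := by rw [hPAQ]
    _ ≤ (P * A).rank := Matrix.rank_mul_le_left _ _
    _ ≤ A.rank := Matrix.rank_mul_le_right _ _

/-- If a signed graph `Γ` has no isolated vertex and `rank A(Γ) ≤ 3`, then for
any vertex `x`, with `Y = N(x)` and `X = V \ Y`, no two vertices of `X` are
adjacent. -/
theorem no_adj_in_complement_of_neighborhood_of_rank_le_three
    {V : Type*} [Fintype V] (G : SimpleGraph V) (σ : V → V → ℝ)
    (hsym : ∀ u v, σ u v = σ v u)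
    (hsgn : ∀ u v, G.Adj u v → σ u v = 1 ∨ σ u v = -1)
    (hrank : (signedAdj G σ).rank ≤ 3)
    (hnoiso : ∀ w : V, ∃ z : V, G.Adj w z)
    (x u v : V) (hu : u ∉ G.neighborSet x) (hv : v ∉ G.neighborSet x) :
    ¬ G.Adj u v := by
  classical
  intro hadj
  simp only [SimpleGraph.mem_neighborSet] at hu hv
  obtain ⟨y, hxy⟩ := hnoiso x
  -- names: a = σ x y, d = σ u v
  set A := signedAdj G σ with hA
  have hxu : ¬ G.Adj x u := hu
  have hxv : ¬ G.Adj x v := hv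
  have hux : u ≠ x := by rintro rfl; exact hv hadj
  have hvx : v ≠ x := by rintro rfl; exact hu hadj.symm
  let f : Fin 4 → V := ![x, y, u, v]
  set a := σ x y with ha
  set b := A y u with hb
  set c := A y v with hc
  set d := σ u v with hd
  have hsub : A.submatrix f f = !![0,a,0,0; a,0,b,c; 0,b,0,d; 0,c,d,0] := by
    ext i j
    fin_cases i <;> fin_cases j <;>
      simp [f, hA, signedAdj, hb, hc, ha, hd, hxy, hadj, hxu, hxv,
        hxy.symm, hadj.symm, G.irrefl, hsym x y, hsym u v, hxu, hxv,
        Matrix.vecHead, Matrix.vecTail] <;>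
      try simp [signedAdj, SimpleGraph.adj_comm, hsym y u, hsym y v, hxu, hxv]
  have hdet : (A.submatrix f f).det = a^2 * d^2 := by
    rw [hsub]; exact det4_aux a b c d
  have ha1 : a ≠ 0 := by rcases hsgn x y hxy with h | h <;> rw [ha, h] <;> norm_num
  have hd1 : d ≠ 0 := by rcases hsgn u v hadj with h | h <;> rw [hd, h] <;> norm_num
  have hdetne : (A.submatrix f f).det ≠ 0 := by
    rw [hdet]; positivity
  have hUnit : IsUnit (A.submatrix f f) :=
    (Matrix.isUnit_iff_isUnit_det _).2 (isUnit_iff_ne_zero.2 hdetne)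
  have hr4 : (A.submatrix f f).rank = 4 := by
    rw [Matrix.rank_of_isUnit _ hUnit]; simp
  have := rank_submatrix_le_aux A f
  rw [hr4] at this
  omega
end

section
/- Let Γ be a signed graph of order n with no isolated vertex and with rank(A(Γ)) ≤ 3. Fix any vertex x of Γ, let Y = N(x) be the neighborhood of x and X = V(Γ) \ Y. Then every vertex of X is adjacent to every vertex of Y. -/
lemma four_le_rank_of_submatrix_isUnit {V : Type*} [Fintype V] [DecidableEq V]
    (A : Matrix V V ℝ) {n : ℕ} (f : Fin n → V)
    (h : IsUnit (A.submatrix f f)) : n ≤ A.rank := by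
  have hrows : LinearIndependent ℝ (fun i => (A.submatrix f f) i) :=
    Matrix.linearIndependent_rows_iff_isUnit.2 h
  have hg : LinearIndependent ℝ (fun i : Fin n => A (f i)) := by
    apply LinearIndependent.of_comp (LinearMap.funLeft ℝ ℝ f)
    exact hrows
  have hspan : Submodule.span ℝ (Set.range fun i : Fin n => A (f i))
      ≤ Submodule.span ℝ (Set.range fun i : V => A i) :=
    Submodule.span_mono (by rintro _ ⟨i, rfl⟩; exact ⟨f i, rfl⟩)
  have h1 : A.rank = Module.finrank ℝ (Submodule.span ℝ (Set.range fun i : V => A i)) := by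
    rw [← Matrix.rank_transpose, Matrix.rank_eq_finrank_span_cols]
    rfl
  have h2 : Module.finrank ℝ (Submodule.span ℝ (Set.range fun i : Fin n => A (f i))) = n := by
    rw [finrank_span_eq_card hg, Fintype.card_fin]
  rw [h1, ← h2]
  exact Submodule.finrank_mono hspan


/-- If a signed graph `Γ` has no isolated vertex and `rank A(Γ) ≤ 3`, then for
any vertex `x`, with `Y = N(x)` and `X = V \ Y`, every vertex of `X` is
adjacent to every vertex of `Y`. -/
theorem adj_between_complement_and_neighborhood_of_rank_le_three
    {V : Type*} [Fintype V] (G : SimpleGraph V) (σ : V → V → ℝ)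
    (hsym : ∀ u v, σ u v = σ v u)
    (hsgn : ∀ u v, G.Adj u v → σ u v = 1 ∨ σ u v = -1)
    (hrank : (signedAdj G σ).rank ≤ 3)
    (hnoiso : ∀ w : V, ∃ z : V, G.Adj w z)
    (x u v : V) (hu : u ∉ G.neighborSet x) (hv : v ∈ G.neighborSet x) :
    G.Adj u v := by
  classical
  rw [SimpleGraph.mem_neighborSet] at hv
  by_cases hux : u = x
  · subst hux; exact hv
  by_contra hne
  obtain ⟨w, hw⟩ := hnoiso u
  have hxu : ¬ G.Adj x u := hu
  -- distinctness
  have hxv : x ≠ v := fun h => G.irrefl (h ▸ hv)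
  have huv : u ≠ v := fun h => hxu (h ▸ hv)
  have hwx : w ≠ x := fun h => hxu ((h ▸ hw).symm)
  have hwu : w ≠ u := fun h => G.irrefl (h ▸ hw)
  have hwv : w ≠ v := fun h => hne (h ▸ hw)
  set s := σ x v with hs
  set b := σ u w with hb
  set a := signedAdj G σ x w with ha
  set c := signedAdj G σ v w with hc
  have hsne : s ≠ 0 := by rcases hsgn x v hv with h | h <;> rw [hs, h] <;> norm_num
  have hbne : b ≠ 0 := by rcases hsgn u w hw with h | h <;> rw [hb, h] <;> norm_num
  have hAsym : ∀ p q, signedAdj G σ p q = signedAdj G σ q p := by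
    intro p q
    simp only [signedAdj, Matrix.of_apply, G.adj_comm p q, hsym p q]
  let f : Fin 4 → V := ![x, u, v, w]
  have hM : (signedAdj G σ).submatrix f f
      = !![0, 0, s, a; 0, 0, 0, b; s, 0, 0, c; a, b, c, 0] := by
    have e1 : signedAdj G σ x x = 0 := by simp [signedAdj]
    have e2 : signedAdj G σ u u = 0 := by simp [signedAdj]
    have e3 : signedAdj G σ v v = 0 := by simp [signedAdj]
    have e4 : signedAdj G σ w w = 0 := by simp [signedAdj]
    have e5 : signedAdj G σ x u = 0 := by simp [signedAdj, hxu]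
    have e6 : signedAdj G σ u v = 0 := by simp [signedAdj, hne]
    have e7 : signedAdj G σ x v = s := by simp [signedAdj, hv, hs]
    have e8 : signedAdj G σ u w = b := by simp [signedAdj, hw, hb]
    have e1' := (hAsym u x).trans e5
    have e2' := (hAsym v x).trans e7
    have e3' := (hAsym v u).trans e6
    have e4' := (hAsym w u).trans e8
    have e5' := hAsym w x
    have e6' := hAsym w v
    ext i j
    fin_cases i <;> fin_cases j <;>
      simp only [f, Matrix.submatrix_apply, Matrix.cons_val', Matrix.cons_val_zero,
        Matrix.cons_val_one, Matrix.head_cons, Matrix.head_fin_const, Matrix.empty_val',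
        Matrix.cons_val_fin_one, Fin.mk_one, Fin.isValue, Matrix.cons_val_succ,
        Matrix.of_apply, Fin.zero_eta, Fin.mk_zero] <;>
      first
        | exact e1 | exact e2 | exact e3 | exact e4 | exact e5 | exact e6
        | exact e7 | exact e8 | exact e1' | exact e2' | exact e3' | exact e4'
        | exact e5' | exact e6' | rfl
  have hdet : ((signedAdj G σ).submatrix f f).det = b ^ 2 * s ^ 2 := by
    rw [hM]
    simp [Matrix.det_succ_row_zero, Fin.sum_univ_succ]
    norm_num [Fin.succAbove, Fin.castSucc, Fin.castAdd, Fin.castLE, Fin.lt_def]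
    simp only [show (![0, 0, b] : Fin 3 → ℝ) 2 = b from rfl]
    ring
  have hunit : IsUnit ((signedAdj G σ).submatrix f f) := by
    rw [Matrix.isUnit_iff_isUnit_det, hdet, isUnit_iff_ne_zero]
    positivity
  have hle := four_le_rank_of_submatrix_isUnit (signedAdj G σ) f hunit
  omega
end

section
/- Let Γ be a signed graph of order n ≥ 2. Then the nullity of Γ equals n − 2 (equivalently rank(A(Γ)) = 2) if and only if the non-isolated vertices of Γ induce a balanced complete bipartite signed graph; that is, Γ is the disjoint union of a balanced signed graph whose underlying graph is a complete bipartite graph K_{p,q} with p, q ≥ 1, together with some (possibly zero) isolated vertices. -/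
section Helpers

open Matrix Module
set_option linter.unusedSectionVars false

variable {V : Type*} [Fintype V]

lemma pairIndep (A : Matrix V V ℝ) (x₀ y₀ : V)
    (h00 : A x₀ x₀ = 0) (h11 : A y₀ y₀ = 0) (h01 : A x₀ y₀ ≠ 0) (h10 : A y₀ x₀ ≠ 0) :
    LinearIndependent ℝ ![Aᵀ x₀, Aᵀ y₀] := by
  rw [LinearIndependent.pair_iff]
  intro s t hst
  have h0 := congrFun hst x₀
  have h1 := congrFun hst y₀
  simp [Matrix.transpose_apply, h00, h11] at h0 h1
  exact ⟨h1.resolve_right h10, h0.resolve_right h01⟩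

lemma span_pair_le (A : Matrix V V ℝ) (x₀ y₀ : V) :
    Submodule.span ℝ (Set.range ![Aᵀ x₀, Aᵀ y₀]) ≤ Submodule.span ℝ (Set.range Aᵀ) :=
  Submodule.span_mono (by rintro _ ⟨i, rfl⟩; fin_cases i <;> exact ⟨_, rfl⟩)

lemma two_le_rank (A : Matrix V V ℝ) (x₀ y₀ : V)
    (h00 : A x₀ x₀ = 0) (h11 : A y₀ y₀ = 0) (h01 : A x₀ y₀ ≠ 0) (h10 : A y₀ x₀ ≠ 0) :
    2 ≤ A.rank := by
  classical
  have hli := pairIndep A x₀ y₀ h00 h11 h01 h10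
  have h2 : finrank ℝ (Submodule.span ℝ (Set.range ![Aᵀ x₀, Aᵀ y₀])) = 2 := by
    rw [finrank_span_eq_card hli]; simp
  calc (2:ℕ) = _ := h2.symm
    _ ≤ finrank ℝ (Submodule.span ℝ (Set.range Aᵀ)) :=
        Submodule.finrank_mono (span_pair_le A x₀ y₀)
    _ = A.rank := (rank_eq_finrank_span_cols A).symm

lemma cols_in_span (A : Matrix V V ℝ) (x₀ y₀ : V)
    (hli : LinearIndependent ℝ ![Aᵀ x₀, Aᵀ y₀]) (hr : A.rank = 2) (w : V) :
    ∃ a b : ℝ, a • Aᵀ x₀ + b • Aᵀ y₀ = Aᵀ w := by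
  classical
  have heq : Submodule.span ℝ (Set.range ![Aᵀ x₀, Aᵀ y₀]) = Submodule.span ℝ (Set.range Aᵀ) := by
    apply Submodule.eq_of_le_of_finrank_le (span_pair_le A x₀ y₀)
    have hrk : A.rank = finrank ℝ (Submodule.span ℝ (Set.range Aᵀ)) := rank_eq_finrank_span_cols A
    rw [finrank_span_eq_card hli, ← hrk, hr]; simp
  have hw : Aᵀ w ∈ Submodule.span ℝ (Set.range Aᵀ) := Submodule.subset_span ⟨w, rfl⟩
  rw [← heq] at hw
  have hrange : Set.range ![Aᵀ x₀, Aᵀ y₀] = {Aᵀ x₀, Aᵀ y₀} := by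
    ext z; simp [Fin.exists_fin_two]; tauto
  rw [hrange] at hw
  exact Submodule.mem_span_pair.mp hw

lemma rank_le_two (A : Matrix V V ℝ) (a b : V → ℝ)
    (hA : ∀ u v, A u v = a u * b v + b u * a v) : A.rank ≤ 2 := by
  classical
  have : A = (Matrix.of fun u (i : Fin 2) => ![a u, b u] i) *
      (Matrix.of fun (i : Fin 2) v => ![b v, a v] i) := by
    ext u v
    simp [Matrix.mul_apply, Fin.sum_univ_two, hA u v]
  calc A.rank ≤ _ := by rw [this]; exact Matrix.rank_mul_le_right _ _
    _ ≤ Fintype.card (Fin 2) := Matrix.rank_le_card_height _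
    _ = 2 := by simp

lemma walkSign_eq {V : Type*} {G : SimpleGraph V} (σ : V → V → ℝ) (g : V → ℝ)
    (hg : ∀ w, g w * g w = 1) (hσ : ∀ u v, G.Adj u v → σ u v = g u * g v)
    {u v : V} (p : G.Walk u v) : walkSign σ p = g u * g v := by
  induction p with
  | nil => simp [walkSign, hg]
  | @cons a b c h q ih =>
    simp only [walkSign, SimpleGraph.Walk.darts_cons, List.map_cons, List.prod_cons] at ih ⊢
    rw [ih, hσ _ _ h]
    linear_combination (g a * g c) * hg b

lemma balanced_of_switch {V : Type*} {G : SimpleGraph V} (σ : V → V → ℝ) (g : V → ℝ)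
    (hg : ∀ w, g w * g w = 1) (hσ : ∀ u v, G.Adj u v → σ u v = g u * g v) :
    IsBalanced G σ := fun u c _ => by rw [walkSign_eq σ g hg hσ c, hg]

lemma four_cycle_sign {V : Type*} {G : SimpleGraph V} (σ : V → V → ℝ)
    (hbal : IsBalanced G σ) {x₀ y₀ x y : V}
    (hxy : x ≠ x₀) (hyy : y ≠ y₀) (hxX : x₀ ≠ y) (hx'y : x ≠ y) (hxy₀ : x₀ ≠ y₀) (hxy₀' : x ≠ y₀)
    (h1 : G.Adj x₀ y) (h2 : G.Adj y x) (h3 : G.Adj x y₀) (h4 : G.Adj y₀ x₀) :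
    σ x₀ y * σ y x * σ x y₀ * σ y₀ x₀ = 1 := by
  let c : G.Walk x₀ x₀ := .cons h1 (.cons h2 (.cons h3 (.cons h4 .nil)))
  have hc : c.IsCycle := by
    refine ⟨⟨⟨?_⟩, ?_⟩, ?_⟩
    · simp only [c, SimpleGraph.Walk.edges_cons, SimpleGraph.Walk.edges_nil]
      simp [Sym2.eq, Sym2.rel_iff']
      aesop
    · simp only [c]
      nofun
    · simp only [c, SimpleGraph.Walk.support_cons, SimpleGraph.Walk.support_nil, List.tail_cons]
      simp
      aesop
  have := hbal x₀ c hc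
  simpa [c, walkSign, mul_assoc] using this

end Helpers

/-- A signed graph of order `n ≥ 2` has nullity `n - 2`, i.e. `rank A(Γ) = 2`,
iff it is a balanced complete bipartite signed graph (with parts `X`, `Y`)
together with some isolated vertices (the vertices outside `X ∪ Y`). -/
theorem rank_eq_two_iff_balanced_complete_bipartite
    {V : Type*} [Fintype V] (G : SimpleGraph V) (σ : V → V → ℝ)
    (hsym : ∀ u v, σ u v = σ v u)
    (hsgn : ∀ u v, G.Adj u v → σ u v = 1 ∨ σ u v = -1)
    (hn : 2 ≤ Fintype.card V) :
    (signedAdj G σ).rank = 2 ↔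
      IsBalanced G σ ∧
        ∃ X Y : Set V, X.Nonempty ∧ Y.Nonempty ∧ Disjoint X Y ∧
          ∀ u v : V, G.Adj u v ↔ (u ∈ X ∧ v ∈ Y) ∨ (u ∈ Y ∧ v ∈ X) := by
  classical
  set A := signedAdj G σ with hAdef
  have hAif : ∀ u v, A u v = if G.Adj u v then σ u v else 0 := fun u v => by
    rw [hAdef]; simp only [signedAdj, Matrix.of_apply]
  have hAadj : ∀ u v, G.Adj u v → A u v = σ u v := fun u v h => by
    rw [hAif, if_pos h]
  have hAzero : ∀ u v, ¬ G.Adj u v → A u v = 0 := fun u v h => by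
    rw [hAif, if_neg h]
  have hAne : ∀ u v, A u v ≠ 0 → G.Adj u v := by
    intro u v h
    by_contra hadj
    exact h (hAzero u v hadj)
  have hdiag : ∀ u, A u u = 0 := fun u => hAzero u u (G.irrefl)
  have hAsym : ∀ u v, A u v = A v u := by
    intro u v
    by_cases h : G.Adj u v
    · rw [hAadj _ _ h, hAadj _ _ h.symm, hsym]
    · rw [hAzero _ _ h, hAzero _ _ fun h' => h h'.symm]
  have hsq : ∀ u v, G.Adj u v → σ u v * σ u v = 1 := by
    intro u v h
    rcases hsgn u v h with h' | h' <;> rw [h'] <;> norm_num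
  have hσne : ∀ u v, G.Adj u v → σ u v ≠ 0 := by
    intro u v h
    rcases hsgn u v h with h' | h' <;> rw [h'] <;> norm_num
  constructor
  · -- forward direction
    intro hr
    obtain ⟨u₀, v₀, hs0⟩ : ∃ u v, A u v ≠ 0 := by
      by_contra hc
      push_neg at hc
      have hz : A = 0 := by ext u v; exact hc u v
      rw [hz] at hr
      simp at hr
    have hadj₀ : G.Adj u₀ v₀ := hAne _ _ hs0
    set s := σ u₀ v₀ with hsdef
    have hA01 : A u₀ v₀ = s := hAadj _ _ hadj₀
    have hs2 : s * s = 1 := hsq _ _ hadj₀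
    have hsne : s ≠ 0 := hσne _ _ hadj₀
    have hli := pairIndep A u₀ v₀ (hdiag u₀) (hdiag v₀)
      (by rw [hA01]; exact hsne) (by rw [← hAsym, hA01]; exact hsne)
    choose α β hab using cols_in_span A u₀ v₀ hli hr
    have K0 : ∀ i w, A i w = α w * A i u₀ + β w * A i v₀ := by
      intro i w
      have h := congrFun (hab w) i
      simpa [Matrix.transpose_apply] using h.symm
    have hβ : ∀ w, A u₀ w = β w * s := by
      intro w; rw [K0 u₀ w, hdiag, hA01]; ring
    have hα : ∀ w, A v₀ w = α w * s := by
      intro w; rw [K0 v₀ w, hdiag, ← hAsym, hA01]; ring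
    have K1 : ∀ w, α w = 0 ∨ β w = 0 := by
      intro w
      have h0 : (0:ℝ) = α w * A w u₀ + β w * A w v₀ := by rw [← K0 w w, hdiag]
      rw [hAsym w u₀, hAsym w v₀, hβ, hα] at h0
      have h1 : (α w * β w) * (2 * s) = 0 := by linear_combination -h0
      rcases mul_eq_zero.mp h1 with h2 | h2
      · exact mul_eq_zero.mp h2
      · exact absurd (by linarith : s = 0) hsne
    have K2 : ∀ u v, A u v = s * (α v * β u + α u * β v) := by
      intro u v
      rw [K0 u v, hAsym u u₀, hAsym u v₀, hβ, hα]; ring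
    have hv₀X : β v₀ ≠ 0 := fun hb => hs0 (by rw [hβ v₀, hb, zero_mul])
    have hu₀Y : α u₀ ≠ 0 := fun ha => hs0 (by rw [hAsym u₀ v₀, hα u₀, ha, zero_mul])
    have hiff : ∀ u v, G.Adj u v ↔ (β u ≠ 0 ∧ α v ≠ 0) ∨ (α u ≠ 0 ∧ β v ≠ 0) := by
      intro u v
      constructor
      · intro h
        have hne : A u v ≠ 0 := by rw [hAadj _ _ h]; exact hσne _ _ h
        rw [K2 u v] at hne
        have hsum : α v * β u + α u * β v ≠ 0 := by
          intro hz; exact hne (by rw [hz, mul_zero])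
        rcases K1 u with hu | hu <;> rcases K1 v with hv | hv
        · exact absurd (by rw [hu, hv]; ring) hsum
        · exact Or.inl ⟨fun hz => hsum (by rw [hu, hv, hz]; ring),
            fun hz => hsum (by rw [hu, hv, hz]; ring)⟩
        · exact Or.inr ⟨fun hz => hsum (by rw [hu, hv, hz]; ring),
            fun hz => hsum (by rw [hu, hv, hz]; ring)⟩
        · exact absurd (by rw [hu, hv]; ring) hsum
      · rintro (⟨hu, hv⟩ | ⟨hu, hv⟩)
        · have hu' : α u = 0 := (K1 u).resolve_right hu
          have hv' : β v = 0 := (K1 v).resolve_left hv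
          apply hAne
          rw [K2 u v, hu', hv']
          intro hz
          exact mul_ne_zero hsne (mul_ne_zero hv hu) (by linear_combination hz)
        · have hu' : β u = 0 := (K1 u).resolve_left hu
          have hv' : α v = 0 := (K1 v).resolve_right hv
          apply hAne
          rw [K2 u v, hu', hv']
          intro hz
          exact mul_ne_zero hsne (mul_ne_zero hu hv) (by linear_combination hz)
    set g : V → ℝ := fun w => if β w ≠ 0 then β w else if α w ≠ 0 then s * α w else 1 with hgdef
    have hg2 : ∀ w, g w * g w = 1 := by
      intro w
      simp only [hgdef]
      by_cases hb : β w ≠ 0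
      · rw [if_pos hb]
        have hadjw : G.Adj u₀ w := hAne _ _ (by rw [hβ w]; exact mul_ne_zero hb hsne)
        have hq : σ u₀ w * σ u₀ w = 1 := hsq _ _ hadjw
        have hσw : σ u₀ w = β w * s := by rw [← hAadj _ _ hadjw, hβ w]
        rw [hσw] at hq
        linear_combination hq - (β w * β w) * hs2
      · rw [if_neg hb]
        by_cases ha : α w ≠ 0
        · rw [if_pos ha]
          have hadjw : G.Adj v₀ w := hAne _ _ (by rw [hα w]; exact mul_ne_zero ha hsne)
          have hq : σ v₀ w * σ v₀ w = 1 := hsq _ _ hadjw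
          have hσw : σ v₀ w = α w * s := by rw [← hAadj _ _ hadjw, hα w]
          rw [hσw] at hq
          linear_combination hq
        · rw [if_neg ha]; norm_num
    have hσg : ∀ u v, G.Adj u v → σ u v = g u * g v := by
      intro u v h
      have hAuv : σ u v = s * (α v * β u + α u * β v) := by rw [← hAadj _ _ h, K2]
      rcases (hiff u v).mp h with ⟨hu, hv⟩ | ⟨hu, hv⟩
      · have hu' : α u = 0 := (K1 u).resolve_right hu
        have hv' : β v = 0 := (K1 v).resolve_left hv
        simp only [hgdef, if_pos hu, if_neg (not_not.mpr hv'), if_pos hv]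
        rw [hAuv, hu', hv']; ring
      · have hu' : β u = 0 := (K1 u).resolve_left hu
        have hv' : α v = 0 := (K1 v).resolve_right hv
        simp only [hgdef, if_neg (not_not.mpr hu'), if_pos hu, if_pos hv]
        rw [hAuv, hu', hv']; ring
    refine ⟨balanced_of_switch σ g hg2 hσg, {w | β w ≠ 0}, {w | α w ≠ 0},
      ⟨v₀, hv₀X⟩, ⟨u₀, hu₀Y⟩, ?_, ?_⟩
    · rw [Set.disjoint_left]
      intro w hw hw'
      rcases K1 w with h | h
      · exact hw' h
      · exact hw h
    · intro u v
      rw [hiff u v]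
      rfl
  · -- backward direction
    rintro ⟨hbal, X, Y, ⟨x₀, hx₀⟩, ⟨y₀, hy₀⟩, hdisj, hiff⟩
    have hXY : ∀ ⦃w⦄, w ∈ X → w ∉ Y := fun w hw => Set.disjoint_left.mp hdisj hw
    have hadjXY : ∀ x ∈ X, ∀ y ∈ Y, G.Adj x y := fun x hx y hy =>
      (hiff x y).mpr (Or.inl ⟨hx, hy⟩)
    have hadj₀ : G.Adj x₀ y₀ := hadjXY x₀ hx₀ y₀ hy₀
    have hkey : ∀ x ∈ X, ∀ y ∈ Y, σ x y = (σ x y₀ * σ x₀ y₀) * σ x₀ y := by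
      intro x hx y hy
      by_cases hxx : x = x₀
      · subst hxx
        linear_combination (-(σ x y)) * hsq x y₀ (hadjXY x hx y₀ hy₀)
      · by_cases hyy : y = y₀
        · subst hyy
          linear_combination (-(σ x y)) * hsq x₀ y (hadjXY x₀ hx₀ y hy)
        · have hd1 : x₀ ≠ y := fun h => hXY hx₀ (h ▸ hy)
          have hd2 : x ≠ y := fun h => hXY hx (h ▸ hy)
          have hd3 : x₀ ≠ y₀ := fun h => hXY hx₀ (h ▸ hy₀)
          have hd4 : x ≠ y₀ := fun h => hXY hx (h ▸ hy₀)
          have hcyc := four_cycle_sign σ hbal hxx hyy hd1 hd2 hd3 hd4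
            (hadjXY x₀ hx₀ y hy) (hadjXY x hx y hy).symm
            (hadjXY x hx y₀ hy₀) (hadjXY x₀ hx₀ y₀ hy₀).symm
          rw [hsym y x, hsym y₀ x₀] at hcyc
          have h1 := hsq x₀ y (hadjXY x₀ hx₀ y hy)
          have h2 := hsq x y₀ (hadjXY x hx y₀ hy₀)
          have h3 := hsq x₀ y₀ hadj₀
          rcases hsgn x₀ y (hadjXY x₀ hx₀ y hy) with hP | hP <;>
            rcases hsgn x y₀ (hadjXY x hx y₀ hy₀) with hR | hR <;>
            rcases hsgn x₀ y₀ hadj₀ with hS | hS <;>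
            rw [hP, hR, hS] at hcyc ⊢ <;> linarith
    set g : V → ℝ := fun w => if w ∈ X then σ w y₀ * σ x₀ y₀ else if w ∈ Y then σ x₀ w else 1
      with hgdef
    have hgX : ∀ x ∈ X, g x = σ x y₀ * σ x₀ y₀ := fun x hx => by
      simp only [hgdef, if_pos hx]
    have hgY : ∀ y ∈ Y, g y = σ x₀ y := fun y hy => by
      simp only [hgdef, if_neg (fun h : y ∈ X => hXY h hy), if_pos hy]
    have hσg : ∀ u v, G.Adj u v → σ u v = g u * g v := by
      intro u v h
      rcases (hiff u v).mp h with ⟨hu, hv⟩ | ⟨hu, hv⟩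
      · rw [hgX u hu, hgY v hv]; exact hkey u hu v hv
      · rw [hgX v hv, hgY u hu, hsym u v]
        rw [hkey v hv u hu]; ring
    set a : V → ℝ := fun w => if w ∈ X then g w else 0 with hadef
    set b : V → ℝ := fun w => if w ∈ Y then g w else 0 with hbdef
    have hdecomp : ∀ u v, A u v = a u * b v + b u * a v := by
      intro u v
      by_cases h : G.Adj u v
      · rcases (hiff u v).mp h with ⟨hu, hv⟩ | ⟨hu, hv⟩
        · have hu' : u ∉ Y := hXY hu
          have hv' : v ∉ X := fun hc => hXY hc hv
          rw [hAadj _ _ h, hσg u v h]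
          simp only [hadef, hbdef, if_pos hu, if_pos hv, if_neg hu', if_neg hv']
          ring
        · have hu' : u ∉ X := fun hc => hXY hc hu
          have hv' : v ∉ Y := hXY hv
          rw [hAadj _ _ h, hσg u v h]
          simp only [hadef, hbdef, if_pos hu, if_pos hv, if_neg hu', if_neg hv']
          ring
      · have hn1 : ¬(u ∈ X ∧ v ∈ Y) := fun hc => h ((hiff u v).mpr (Or.inl hc))
        have hn2 : ¬(u ∈ Y ∧ v ∈ X) := fun hc => h ((hiff u v).mpr (Or.inr hc))
        rw [hAzero _ _ h]
        simp only [hadef, hbdef]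
        have e1 : (if u ∈ X then g u else 0) * (if v ∈ Y then g v else 0) = 0 := by
          by_cases h2 : u ∈ X
          · rw [if_neg (fun h3 => hn1 ⟨h2, h3⟩), mul_zero]
          · rw [if_neg h2, zero_mul]
        have e2 : (if u ∈ Y then g u else 0) * (if v ∈ X then g v else 0) = 0 := by
          by_cases h4 : u ∈ Y
          · rw [if_neg (fun h5 => hn2 ⟨h4, h5⟩), mul_zero]
          · rw [if_neg h4, zero_mul]
        rw [e1, e2, add_zero]
    have hle : A.rank ≤ 2 := rank_le_two A a b hdecomp
    have hge : 2 ≤ A.rank := two_le_rank A x₀ y₀ (hdiag x₀) (hdiag y₀)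
      (by rw [hAadj _ _ hadj₀]; exact hσne _ _ hadj₀)
      (by rw [hAadj _ _ hadj₀.symm]; exact hσne _ _ hadj₀.symm)
    omega
end

section
/- Let Γ be a connected signed graph of order n ≥ 4 whose underlying graph is not a star. If Γ contains a pendant vertex (a vertex of degree 1), then η(Γ) ≤ n − 4, i.e. rank(A(Γ)) ≥ 4. -/
/-- A connected signed graph of order `n ≥ 4` which is not a star and contains a
pendant vertex has nullity at most `n - 4`, i.e. `rank A(Γ) ≥ 4`. -/
theorem rank_ge_four_of_pendant_not_star
    {V : Type*} [Fintype V] (G : SimpleGraph V) (σ : V → V → ℝ)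
    (hsym : ∀ u v, σ u v = σ v u)
    (hsgn : ∀ u v, G.Adj u v → σ u v = 1 ∨ σ u v = -1)
    (hn : 4 ≤ Fintype.card V) (hconn : G.Connected)
    (hnotstar : ¬ ∃ c : V, ∀ a b : V, G.Adj a b ↔ (a = c ∨ b = c) ∧ a ≠ b)
    (hpend : ∃ x y : V, G.neighborSet x = {y}) :
    4 ≤ (signedAdj G σ).rank := by
  classical
  obtain ⟨x, y, hxy⟩ := hpend
  -- x is adjacent exactly to y
  have hxadj : ∀ z, G.Adj x z ↔ z = y := by
    intro z
    rw [← SimpleGraph.mem_neighborSet, hxy, Set.mem_singleton_iff]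
  have hAxy : G.Adj x y := (hxadj y).mpr rfl
  have hxney : x ≠ y := hAxy.ne
  -- there is an edge avoiding x and y
  have hedge : ∃ a b : V, G.Adj a b ∧ a ≠ x ∧ a ≠ y ∧ b ≠ x ∧ b ≠ y := by
    by_contra hno
    push_neg at hno
    -- every edge is incident to y
    have hE : ∀ a b, G.Adj a b → a = y ∨ b = y := by
      intro a b hab
      by_contra hc
      push_neg at hc
      rcases eq_or_ne a x with rfl | hax
      · exact hc.2 ((hxadj b).mp hab)
      rcases eq_or_ne b x with rfl | hbx
      · exact hc.1 ((hxadj a).mp hab.symm)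
      · exact hc.2 (hno a b hab hax hc.1 hbx)
    -- every vertex other than y is adjacent to y
    have hA : ∀ v : V, v ≠ y → G.Adj v y := by
      intro v hv
      obtain ⟨p⟩ := hconn.preconnected v y
      cases p with
      | nil => exact absurd rfl hv
      | cons h q =>
        rcases hE _ _ h with h1 | h1
        · exact absurd h1 hv
        · rwa [h1] at h
    exact hnotstar ⟨y, fun a b => by
      constructor
      · intro hab
        exact ⟨(hE a b hab).imp id id, hab.ne⟩
      · rintro ⟨h1 | h1, h2⟩
        · subst h1
          exact ((hA b (Ne.symm h2))).symm
        · subst h1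
          exact hA a h2⟩
  obtain ⟨a, b, hab, hax, hay, hbx, hby⟩ := hedge
  set A := signedAdj G σ with hA
  have hent : ∀ u v, G.Adj u v → A u v = σ u v := by
    intro u v h; simp [hA, signedAdj, h]
  have hent0 : ∀ u v, ¬ G.Adj u v → A u v = 0 := by
    intro u v h; simp [hA, signedAdj, h]
  have hs : A x y ≠ 0 := by
    rw [hent x y hAxy]
    rcases hsgn x y hAxy with h | h <;> rw [h] <;> norm_num
  have ht : A a b ≠ 0 := by
    rw [hent a b hab]
    rcases hsgn a b hab with h | h <;> rw [h] <;> norm_num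
  have hAxa : A x a = 0 := hent0 x a (fun h => hay ((hxadj a).mp h))
  have hAxb : A x b = 0 := hent0 x b (fun h => hby ((hxadj b).mp h))
  have hAxx : A x x = 0 := hent0 x x (G.irrefl)
  have hAax : A a x = 0 := hent0 a x (fun h => hay ((hxadj a).mp h.symm))
  have hAbx : A b x = 0 := hent0 b x (fun h => hby ((hxadj b).mp h.symm))
  have hAaa : A a a = 0 := hent0 a a (G.irrefl)
  have hAbb : A b b = 0 := hent0 b b (G.irrefl)
  have hAyx : A y x ≠ 0 := by
    rw [hent y x hAxy.symm, hsym y x, ← hent x y hAxy]; exact hs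
  have hAba : A b a ≠ 0 := by
    rw [hent b a hab.symm, hsym b a, ← hent a b hab]; exact ht
  -- the four columns of A at x, y, a, b
  let e : Fin 4 → V := ![x, y, a, b]
  let w : Fin 4 → (V → ℝ) := fun i => Matrix.mulVec A (Pi.single (e i) 1)
  have hw : ∀ i v, w i v = A v (e i) := by
    intro i v; simp [w]
  have hli : LinearIndependent ℝ w := by
    rw [Fintype.linearIndependent_iff]
    intro g hg
    have hgv : ∀ v : V, g 0 * A v x + g 1 * A v y + g 2 * A v a + g 3 * A v b = 0 := by
      intro v
      have := congrFun hg v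
      simpa [Fin.sum_univ_four, w, e] using this
    have h1 : g 1 = 0 := by
      have := hgv x
      rw [hAxx, hAxa, hAxb] at this
      have : g 1 * A x y = 0 := by linarith
      exact (mul_eq_zero.mp this).resolve_right hs
    have h3 : g 3 = 0 := by
      have h := hgv a
      rw [hAax, hAaa, h1] at h
      have : g 3 * A a b = 0 := by linarith
      exact (mul_eq_zero.mp this).resolve_right ht
    have h2 : g 2 = 0 := by
      have h := hgv b
      rw [hAbx, hAbb, h1, h3] at h
      have : g 2 * A b a = 0 := by linarith
      exact (mul_eq_zero.mp this).resolve_right hAba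
    have h0 : g 0 = 0 := by
      have h := hgv y
      rw [h1, h2, h3] at h
      have : g 0 * A y x = 0 := by linarith
      exact (mul_eq_zero.mp this).resolve_right hAyx
    intro i
    fin_cases i <;> assumption
  -- conclude
  have hspan : Submodule.span ℝ (Set.range w) ≤ LinearMap.range A.mulVecLin := by
    rw [Submodule.span_le]
    rintro _ ⟨i, rfl⟩
    exact ⟨Pi.single (e i) 1, rfl⟩
  have h4 : Module.finrank ℝ (Submodule.span ℝ (Set.range w)) = 4 := by
    rw [finrank_span_eq_card hli]; simp
  calc (4 : ℕ) = Module.finrank ℝ (Submodule.span ℝ (Set.range w)) := h4.symm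
    _ ≤ Module.finrank ℝ (LinearMap.range A.mulVecLin) := Submodule.finrank_mono hspan
    _ = A.rank := rfl
end

section
/- Let Γ be a signed graph containing a special path P v₁v₂v₃ with σ(v₁v₂) = −1 and σ(v₂v₃) = +1. Suppose v₁ has a neighbor v other than v₂, and let Γ′ be the signed graph obtained from Γ by deleting the edge vv₁ and adding a new edge vv₃ carrying the same sign σ(vv₁). Then η(Γ′) = η(Γ). -/
/- Let `Γ` contain a special path `P v₁ v₂ v₃` with `σ(v₁v₂) = -1`,
`σ(v₂v₃) = 1`, and let `v ≠ v₂` be a neighbor of `v₁`.  If `Γ'` is obtained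
from `Γ` by deleting the edge `v v₁` and adding the edge `v v₃` with the same
sign as `v v₁`, then `η(Γ') = η(Γ)`. -/
open Matrix

set_option maxHeartbeats 1000000 in
open Classical in
theorem nullity_invariant_under_edge_relocation_along_special_path
    {V : Type*} [Fintype V] (G : SimpleGraph V) (σ : V → V → ℝ)
    (hsym : ∀ u v, σ u v = σ v u)
    (hsgn : ∀ u v, G.Adj u v → σ u v = 1 ∨ σ u v = -1)
    (v₁ v₂ v₃ v : V)
    (h12 : G.Adj v₁ v₂) (h23 : G.Adj v₂ v₃) (h13ne : v₁ ≠ v₃)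
    (hdeg : G.neighborSet v₂ = {v₁, v₃})
    (h13 : ¬ G.Adj v₁ v₃)
    (hcommon : ∀ w : V, w ≠ v₂ → ¬ (G.Adj v₁ w ∧ G.Adj v₃ w))
    (hs12 : σ v₁ v₂ = -1) (hs23 : σ v₂ v₃ = 1)
    (hv : G.Adj v v₁) (hvne : v ≠ v₂) :
    Fintype.card V -
        (signedAdj ((G.deleteEdges {s(v, v₁)}) ⊔ SimpleGraph.fromEdgeSet {s(v, v₃)})
          (fun a b =>
            if (a = v ∧ b = v₃) ∨ (a = v₃ ∧ b = v) then σ v v₁ else σ a b)).rank =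
      Fintype.card V - (signedAdj G σ).rank := by
  set A := signedAdj G σ with hAdef
  set c := σ v v₁ with hc
  have hadj2 : ∀ w, G.Adj v₂ w ↔ w = v₁ ∨ w = v₃ := by
    intro w
    have : w ∈ G.neighborSet v₂ ↔ w ∈ ({v₁, v₃} : Set V) := by rw [hdeg]
    simpa [SimpleGraph.mem_neighborSet] using this
  have hvv1 : v ≠ v₁ := fun h => G.irrefl (h ▸ hv)
  have hv3v : ¬ G.Adj v₃ v := fun h => hcommon v hvne ⟨hv.symm, h⟩
  have hvv3 : v ≠ v₃ := by rintro rfl; exact h13 hv.symm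
  have hvv2adj : ¬ G.Adj v v₂ := by
    intro h
    rcases (hadj2 v).1 h.symm with h' | h' <;> [exact hvv1 h'; exact hvv3 h']
  have h12' : v₁ ≠ v₂ := h12.ne
  have h23' : v₂ ≠ v₃ := h23.ne
  have hA : ∀ a b, A a b = if G.Adj a b then σ a b else 0 := by
    intro a b; rw [hAdef]; simp [signedAdj]
  have hrow : ∀ j, A v₂ j = if j = v₁ then -1 else if j = v₃ then 1 else 0 := by
    intro j
    rcases eq_or_ne j v₁ with rfl | hj1
    · rw [hA]; simp [(hadj2 j).2 (Or.inl rfl), hsym v₂ j, hs12]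
    rcases eq_or_ne j v₃ with rfl | hj3
    · rw [hA]; simp [(hadj2 j).2 (Or.inr rfl), hs23, hj1]
    · have hna : ¬ G.Adj v₂ j := by rw [hadj2]; tauto
      rw [hA]; simp [hj1, hj3, hna]
  have hcol : ∀ i, A i v₂ = if i = v₁ then -1 else if i = v₃ then 1 else 0 := by
    intro i
    have : A i v₂ = A v₂ i := by
      rw [hA, hA, hsym]
      congr 1
      simp [SimpleGraph.adj_comm]
    rw [this, hrow]
  set B := (signedAdj ((G.deleteEdges {s(v, v₁)}) ⊔ SimpleGraph.fromEdgeSet {s(v, v₃)})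
          (fun a b =>
            if (a = v ∧ b = v₃) ∨ (a = v₃ ∧ b = v) then σ v v₁ else σ a b)) with hBdef
  have hBapply : ∀ a b, B a b =
      if ((G.deleteEdges {s(v, v₁)}) ⊔ SimpleGraph.fromEdgeSet {s(v, v₃)}).Adj a b then
        (if (a = v ∧ b = v₃) ∨ (a = v₃ ∧ b = v) then σ v v₁ else σ a b) else 0 := by
    intro a b; rw [hBdef]; simp [signedAdj]
  have hGadj : ∀ a b, ((G.deleteEdges {s(v, v₁)}) ⊔ SimpleGraph.fromEdgeSet {s(v, v₃)}).Adj a b ↔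
      (G.Adj a b ∧ ¬((a = v ∧ b = v₁) ∨ (a = v₁ ∧ b = v))) ∨
      (((a = v ∧ b = v₃) ∨ (a = v₃ ∧ b = v)) ∧ a ≠ b) := by
    intro a b
    simp [SimpleGraph.deleteEdges_adj, Sym2.eq_iff]
  -- the unchanged-entry case
  have hsame : ∀ i j, ¬((i = v ∧ j = v₃) ∨ (i = v₃ ∧ j = v)) →
      ¬((i = v ∧ j = v₁) ∨ (i = v₁ ∧ j = v)) → B i j = A i j := by
    intro i j hc1 hc2
    have hadj : ((G.deleteEdges {s(v, v₁)}) ⊔ SimpleGraph.fromEdgeSet {s(v, v₃)}).Adj i j ↔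
        G.Adj i j := by rw [hGadj]; tauto
    rw [hBapply, hA]
    by_cases h : G.Adj i j
    · rw [if_pos (hadj.2 h), if_pos h, if_neg hc1]
    · rw [if_neg (fun h' => h (hadj.1 h')), if_neg h]
  have key : B = transvection v v₂ c * A * transvection v₂ v c := by
    ext i j
    rcases eq_or_ne j v with hj | hj
    · rw [hj, mul_transvection_apply_same]
      rcases eq_or_ne i v with hi | hi
      · rw [hi, transvection_mul_apply_same, transvection_mul_apply_same]
        have h1 : A v₂ v = 0 := by rw [hrow]; simp [hvv1, hvv3]
        have h2 : A v₂ v₂ = 0 := by rw [hrow]; simp [h12'.symm, h23']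
        have h3 : A v v₂ = 0 := by rw [hA]; simp [hvv2adj]
        have h4 : A v v = 0 := by rw [hA]; simp
        have h5 : B v v = 0 := by rw [hBapply, if_neg (SimpleGraph.irrefl _)]
        rw [h1, h2, h3, h4, h5]; ring
      · rw [transvection_mul_apply_of_ne _ _ _ _ hi, transvection_mul_apply_of_ne _ _ _ _ hi]
        rcases eq_or_ne i v₁ with hi1 | hi1
        · rw [hi1]
          have h1 : A v₁ v = c := by rw [hA]; simp [hv.symm, hsym v₁ v]; exact hc.symm
          have h2 : A v₁ v₂ = -1 := by rw [hcol]; simp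
          have h3 : B v₁ v = 0 := by
            rw [hBapply, if_neg]
            rw [hGadj]
            rintro (⟨-, h'⟩ | ⟨⟨h', -⟩ | ⟨h', -⟩, -⟩)
            · exact h' (Or.inr ⟨rfl, rfl⟩)
            · exact hvv1 h'.symm
            · exact h13ne h'
          rw [h1, h2, h3]; ring
        rcases eq_or_ne i v₃ with hi3 | hi3
        · rw [hi3]
          have h1 : A v₃ v = 0 := by rw [hA]; simp [hv3v]
          have h2 : A v₃ v₂ = 1 := by rw [hcol]; simp [h13ne.symm]
          have h3 : B v₃ v = c := by
            rw [hBapply, if_pos, if_pos (Or.inr ⟨rfl, rfl⟩)]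
            rw [hGadj]
            exact Or.inr ⟨Or.inr ⟨rfl, rfl⟩, Ne.symm hvv3⟩
          rw [h1, h2, h3]; ring
        · have h2 : A i v₂ = 0 := by rw [hcol]; simp [hi1, hi3]
          have h3 : B i v = A i v := by
            apply hsame
            · rintro (⟨-, h'⟩ | ⟨h', -⟩) <;> [exact hvv3 h'; exact hi3 h']
            · rintro (⟨-, h'⟩ | ⟨h', -⟩) <;> [exact hvv1 h'; exact hi1 h']
          rw [h2, h3]; ring
    · rw [mul_transvection_apply_of_ne _ _ _ _ hj]
      rcases eq_or_ne i v with hi | hi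
      · rw [hi, transvection_mul_apply_same]
        rcases eq_or_ne j v₁ with hj1 | hj1
        · rw [hj1]
          have h1 : A v v₁ = c := by rw [hA]; simp [hv]; exact hc.symm
          have h2 : A v₂ v₁ = -1 := by rw [hrow]; simp
          have h3 : B v v₁ = 0 := by
            rw [hBapply, if_neg]
            rw [hGadj]
            rintro (⟨-, h'⟩ | ⟨⟨-, h'⟩ | ⟨h', -⟩, -⟩)
            · exact h' (Or.inl ⟨rfl, rfl⟩)
            · exact h13ne h'
            · exact hvv3 h'
          rw [h1, h2, h3]; ring
        rcases eq_or_ne j v₃ with hj3 | hj3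
        · rw [hj3]
          have h1 : A v v₃ = 0 := by
            have hnadj : ¬ G.Adj v v₃ := fun h => hv3v h.symm
            rw [hA, if_neg hnadj]
          have h2 : A v₂ v₃ = 1 := by rw [hrow]; simp [h13ne.symm]
          have h3 : B v v₃ = c := by
            rw [hBapply, if_pos, if_pos (Or.inl ⟨rfl, rfl⟩)]
            rw [hGadj]
            exact Or.inr ⟨Or.inl ⟨rfl, rfl⟩, hvv3⟩
          rw [h1, h2, h3]; ring
        · have h2 : A v₂ j = 0 := by rw [hrow]; simp [hj1, hj3]
          have h3 : B v j = A v j := by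
            apply hsame
            · rintro (⟨-, h'⟩ | ⟨h', -⟩) <;> [exact hj3 h'; exact hvv3 h']
            · rintro (⟨-, h'⟩ | ⟨h', -⟩) <;> [exact hj1 h'; exact hvv1 h']
          rw [h2, h3]; ring
      · rw [transvection_mul_apply_of_ne _ _ _ _ hi]
        apply hsame
        · rintro (⟨h', -⟩ | ⟨-, h'⟩) <;> [exact hi h'; exact hj h']
        · rintro (⟨h', -⟩ | ⟨-, h'⟩) <;> [exact hi h'; exact hj h']
  have hd1 : IsUnit (transvection v v₂ c).det := by
    rw [det_transvection_of_ne _ _ hvne]; exact isUnit_one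
  have hd2 : IsUnit (transvection v₂ v c).det := by
    rw [det_transvection_of_ne _ _ hvne.symm]; exact isUnit_one
  rw [key, rank_mul_eq_left_of_isUnit_det _ _ hd2, rank_mul_eq_right_of_isUnit_det _ _ hd1]
end

section
/- Let Γ be a signed graph containing a special path P v₁v₂v₃ with σ(v₁v₂) = −1 and σ(v₂v₃) = +1, and let Γ′ be the signed graph obtained from Γ by contracting the path into a single vertex (i.e. deleting v₁ and v₂ and, for every neighbor v ≠ v₂ of v₁, adding the edge vv₃ with sign σ(vv₁)). Then η(Γ′) = η(Γ); equivalently, rank(A(Γ)) = rank(A(Γ′)) + 2. -/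
/-- The graph obtained from `G` by contracting a special path `P v₁ v₂ v₃` into
the single vertex `v₃`: delete `v₁` and `v₂`, and join `v₃` to every former
neighbor of `v₁` (other than `v₂`). -/
def contractSpecialPath {V : Type*} (G : SimpleGraph V) (v₁ v₂ v₃ : V)
    (h13 : ¬ G.Adj v₁ v₃) : SimpleGraph {w : V // w ≠ v₁ ∧ w ≠ v₂} where
  Adj a b := G.Adj a.1 b.1 ∨ (a.1 = v₃ ∧ G.Adj v₁ b.1) ∨ (b.1 = v₃ ∧ G.Adj v₁ a.1)
  symm := by
    constructor
    rintro a b (h | ⟨h1, h2⟩ | ⟨h1, h2⟩)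
    · exact Or.inl h.symm
    · exact Or.inr (Or.inr ⟨h1, h2⟩)
    · exact Or.inr (Or.inl ⟨h1, h2⟩)
  loopless := by
    constructor
    rintro a (h | ⟨h1, h2⟩ | ⟨h1, h2⟩)
    · exact G.loopless.irrefl _ h
    · rw [h1] at h2; exact h13 h2
    · rw [h1] at h2; exact h13 h2

open Matrix in
private lemma finrank_submodule_prod' {R M N : Type*} [Field R] [AddCommGroup M] [AddCommGroup N]
    [Module R M] [Module R N] [FiniteDimensional R M] [FiniteDimensional R N]
    (p : Submodule R M) (q : Submodule R N) :
    Module.finrank R (p.prod q) = Module.finrank R p + Module.finrank R q := by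
  let e : (p.prod q) ≃ₗ[R] p × q :=
    { toFun := fun x => (⟨x.1.1, x.2.1⟩, ⟨x.1.2, x.2.2⟩)
      invFun := fun x => ⟨(x.1.1, x.2.1), ⟨x.1.2, x.2.2⟩⟩
      map_add' := fun _ _ => rfl
      map_smul' := fun _ _ => rfl
      left_inv := fun _ => rfl
      right_inv := fun _ => rfl }
  rw [e.finrank_eq, Module.finrank_prod]

open Matrix in
private lemma rank_fromBlocks_diag' {m n : Type*} [Fintype m] [Fintype n]
    (A : Matrix m m ℝ) (D : Matrix n n ℝ) :
    (fromBlocks A (0 : Matrix m n ℝ) (0 : Matrix n m ℝ) D).rank = A.rank + D.rank := by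
  classical
  let E := LinearEquiv.sumArrowLequivProdArrow m n ℝ ℝ
  have hM : (fromBlocks A (0 : Matrix m n ℝ) (0 : Matrix n m ℝ) D).mulVecLin
      = (E.symm : ((m → ℝ) × (n → ℝ)) →ₗ[ℝ] (m ⊕ n → ℝ)) ∘ₗ
        ((A.mulVecLin.prodMap D.mulVecLin) ∘ₗ (E : (m ⊕ n → ℝ) →ₗ[ℝ] (m → ℝ) × (n → ℝ))) := by
    apply LinearMap.ext; intro x
    simp only [mulVecLin_apply, LinearMap.coe_comp, Function.comp_apply, LinearEquiv.coe_coe,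
      LinearMap.prodMap_apply, fromBlocks_mulVec, zero_mulVec, add_zero, zero_add]
    ext i
    cases i <;>
      simp [E, LinearEquiv.sumArrowLequivProdArrow, Equiv.sumArrowEquivProdArrow]
  have hprod : LinearMap.range (A.mulVecLin.prodMap D.mulVecLin)
      = (LinearMap.range A.mulVecLin).prod (LinearMap.range D.mulVecLin) := by
    ext ⟨x, y⟩
    simp only [LinearMap.mem_range, Submodule.mem_prod, LinearMap.prodMap_apply, Prod.mk.injEq,
      Prod.ext_iff]
    constructor
    · rintro ⟨z, hz1, hz2⟩; exact ⟨⟨z.1, hz1⟩, ⟨z.2, hz2⟩⟩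
    · rintro ⟨⟨a, ha⟩, ⟨b, hb⟩⟩; exact ⟨(a, b), ha, hb⟩
  rw [Matrix.rank, hM, LinearMap.range_comp, LinearMap.range_comp_of_range_eq_top _ E.range,
    hprod]
  rw [LinearEquiv.finrank_map_eq, finrank_submodule_prod']
  rfl

open Matrix in
private lemma rank_fromBlocks_of_invertible' {m n : Type*} [Fintype m] [Fintype n]
    [DecidableEq m] [DecidableEq n]
    (A : Matrix m m ℝ) (B : Matrix m n ℝ) (C : Matrix n m ℝ) (D : Matrix n n ℝ)
    [Invertible A] :
    (fromBlocks A B C D).rank = Fintype.card m + (D - C * ⅟A * B).rank := by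
  rw [fromBlocks_eq_of_invertible₁₁ A B C D]
  have hL : IsUnit (fromBlocks (1 : Matrix m m ℝ) 0 (C * ⅟A) 1).det := by
    rw [det_fromBlocks_zero₁₂]; simp
  have hU : IsUnit (fromBlocks (1 : Matrix m m ℝ) (⅟A * B) 0 1).det := by
    rw [det_fromBlocks_zero₂₁]; simp
  rw [Matrix.rank_mul_eq_left_of_isUnit_det _ _ hU, Matrix.rank_mul_eq_right_of_isUnit_det _ _ hL,
    rank_fromBlocks_diag', Matrix.rank_of_isUnit A (isUnit_of_invertible A)]

/- Let `Γ` contain a special path `P v₁ v₂ v₃` with `σ(v₁v₂) = -1` and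
`σ(v₂v₃) = 1`, and let `Γ'` be obtained from `Γ` by contracting the path into a
single vertex (new edges from `v₃` inherit the signs of the corresponding edges
at `v₁`).  Then `η(Γ') = η(Γ)`; equivalently `rank A(Γ) = rank A(Γ') + 2`. -/
open Classical in
theorem nullity_invariant_under_special_path_contraction
    {V : Type*} [Fintype V] (G : SimpleGraph V) (σ : V → V → ℝ)
    (hsym : ∀ u v, σ u v = σ v u)
    (hsgn : ∀ u v, G.Adj u v → σ u v = 1 ∨ σ u v = -1)
    (v₁ v₂ v₃ : V)
    (h12 : G.Adj v₁ v₂) (h23 : G.Adj v₂ v₃) (h13ne : v₁ ≠ v₃)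
    (hdeg : G.neighborSet v₂ = {v₁, v₃})
    (h13 : ¬ G.Adj v₁ v₃)
    (hcommon : ∀ w : V, w ≠ v₂ → ¬ (G.Adj v₁ w ∧ G.Adj v₃ w))
    (hs12 : σ v₁ v₂ = -1) (hs23 : σ v₂ v₃ = 1) :
    (signedAdj G σ).rank =
      (signedAdj (contractSpecialPath G v₁ v₂ v₃ h13)
        (fun a b =>
          if a.1 = v₃ ∧ G.Adj v₁ b.1 then σ v₁ b.1
          else if b.1 = v₃ ∧ G.Adj v₁ a.1 then σ v₁ a.1
          else σ a.1 b.1)).rank + 2 := by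
  classical
  have hv12 : v₁ ≠ v₂ := h12.ne
  have hv23 : v₂ ≠ v₃ := h23.ne
  have hadj2 : ∀ u : V, G.Adj v₂ u ↔ (u = v₁ ∨ u = v₃) := by
    intro u
    constructor
    · intro h
      have : u ∈ G.neighborSet v₂ := h
      rw [hdeg] at this
      simpa using this
    · rintro (rfl | rfl)
      · exact h12.symm
      · exact h23
  set A := signedAdj G σ with hA
  have hAdef : ∀ u v : V, A u v = if G.Adj u v then σ u v else 0 := fun u v => rfl
  let f2 : Fin 2 → V := ![v₁, v₂]
  let e : (Fin 2 ⊕ {w : V // w ≠ v₁ ∧ w ≠ v₂}) ≃ V :=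
    { toFun := Sum.elim f2 Subtype.val
      invFun := fun w => if h1 : w = v₁ then Sum.inl 0 else if h2 : w = v₂ then Sum.inl 1
        else Sum.inr ⟨w, h1, h2⟩
      left_inv := by
        rintro (i | w)
        · fin_cases i
          · simp [f2]
          · simp [f2, hv12, Ne.symm hv12]
        · simp [w.2.1, w.2.2]
      right_inv := by
        intro w
        by_cases h1 : w = v₁
        · subst h1; simp [f2]
        · by_cases h2 : w = v₂
          · subst h2; simp [h1, f2]
          · simp [h1, h2] }
  let M : Matrix (Fin 2) (Fin 2) ℝ := !![0, -1; -1, 0]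
  have hMM : M * M = 1 := by
    ext i j
    fin_cases i <;> fin_cases j <;>
      simp [M, Matrix.mul_apply, Fin.sum_univ_two]
  letI : Invertible M := ⟨M, hMM, hMM⟩
  have hinvM : (⅟M : Matrix (Fin 2) (Fin 2) ℝ) = M := rfl
  let Bm : Matrix (Fin 2) {w : V // w ≠ v₁ ∧ w ≠ v₂} ℝ := Matrix.of fun i w => A (f2 i) w.1
  let Cm : Matrix {w : V // w ≠ v₁ ∧ w ≠ v₂} (Fin 2) ℝ := Matrix.of fun w i => A w.1 (f2 i)
  let Dm : Matrix {w : V // w ≠ v₁ ∧ w ≠ v₂} {w : V // w ≠ v₁ ∧ w ≠ v₂} ℝ :=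
    Matrix.of fun w x => A w.1 x.1
  have hblocks : A.submatrix e e = Matrix.fromBlocks M Bm Cm Dm := by
    ext i j
    rcases i with i | w <;> rcases j with j | x
    · fin_cases i <;> fin_cases j
      · show A v₁ v₁ = 0
        rw [hAdef, if_neg (G.irrefl)]
      · show A v₁ v₂ = -1
        rw [hAdef, if_pos h12, hs12]
      · show A v₂ v₁ = -1
        rw [hAdef, if_pos h12.symm, hsym, hs12]
      · show A v₂ v₂ = 0
        rw [hAdef, if_neg (G.irrefl)]
    · rfl
    · rfl
    · rfl
  have hrank : A.rank = (A.submatrix e e).rank := (Matrix.rank_submatrix A e e).symm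
  rw [hrank, hblocks, rank_fromBlocks_of_invertible' M Bm Cm Dm]
  have hS : Dm - Cm * ⅟M * Bm
      = signedAdj (contractSpecialPath G v₁ v₂ v₃ h13)
        (fun a b =>
          if a.1 = v₃ ∧ G.Adj v₁ b.1 then σ v₁ b.1
          else if b.1 = v₃ ∧ G.Adj v₁ a.1 then σ v₁ a.1
          else σ a.1 b.1) := by
    rw [hinvM]
    ext w x
    have hw1 : w.1 ≠ v₁ := w.2.1
    have hw2 : w.1 ≠ v₂ := w.2.2
    have hx1 : x.1 ≠ v₁ := x.2.1
    have hx2 : x.1 ≠ v₂ := x.2.2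
    have hCM : (Cm * M * Bm) w x = -(Cm w 0 * Bm 1 x) - Cm w 1 * Bm 0 x := by
      simp [Matrix.mul_apply, Fin.sum_univ_two, M]
      ring
    have hsub : (Dm - Cm * M * Bm) w x = Dm w x + Cm w 0 * Bm 1 x + Cm w 1 * Bm 0 x := by
      rw [Matrix.sub_apply, hCM]; ring
    rw [hsub]
    have hCw0 : Cm w 0 = if G.Adj v₁ w.1 then σ v₁ w.1 else 0 := by
      show A w.1 v₁ = _
      rw [hAdef, G.adj_comm, hsym]
    have hCw1 : Cm w 1 = if w.1 = v₃ then 1 else 0 := by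
      show A w.1 v₂ = _
      rw [hAdef]
      by_cases h : w.1 = v₃
      · rw [if_pos, if_pos h]
        · rw [h, hsym, hs23]
        · rw [h]; exact h23.symm
      · rw [if_neg, if_neg h]
        intro hadj
        rcases (hadj2 w.1).mp hadj.symm with h' | h'
        · exact hw1 h'
        · exact h h'
    have hB0 : Bm 0 x = if G.Adj v₁ x.1 then σ v₁ x.1 else 0 := rfl
    have hB1 : Bm 1 x = if x.1 = v₃ then 1 else 0 := by
      show A v₂ x.1 = _
      rw [hAdef]
      by_cases h : x.1 = v₃
      · rw [if_pos, if_pos h]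
        · rw [h, hs23]
        · rw [h]; exact h23
      · rw [if_neg, if_neg h]
        intro hadj
        rcases (hadj2 x.1).mp hadj with h' | h'
        · exact hx1 h'
        · exact h h'
    have hD : Dm w x = if G.Adj w.1 x.1 then σ w.1 x.1 else 0 := rfl
    rw [hCw0, hCw1, hB0, hB1, hD]
    simp only [signedAdj, contractSpecialPath, Matrix.of_apply]
    by_cases hwv3 : w.1 = v₃
    · by_cases hxv3 : x.1 = v₃
      · have hnadj : ¬ G.Adj w.1 x.1 := by rw [hwv3, hxv3]; exact G.irrefl
        have hn1x : ¬ G.Adj v₁ x.1 := by rw [hxv3]; exact h13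
        have hn1w : ¬ G.Adj v₁ w.1 := by rw [hwv3]; exact h13
        simp [hnadj, hn1x, hn1w]
      · by_cases h1x : G.Adj v₁ x.1
        · have hn3x : ¬ G.Adj v₃ x.1 := fun h => hcommon x.1 hx2 ⟨h1x, h⟩
          have hnadj : ¬ G.Adj w.1 x.1 := by rw [hwv3]; exact hn3x
          have hn1w : ¬ G.Adj v₁ w.1 := by rw [hwv3]; exact h13
          simp [hwv3, hxv3, h1x, hnadj, hn1w, hn3x]
        · have hn1w : ¬ G.Adj v₁ w.1 := by rw [hwv3]; exact h13
          by_cases hadj : G.Adj w.1 x.1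
          · simp [hwv3, hxv3, h1x, hadj, hn1w]
          · simp [hwv3, hxv3, h1x, hadj, hn1w]
    · by_cases hxv3 : x.1 = v₃
      · by_cases h1w : G.Adj v₁ w.1
        · have hn3w : ¬ G.Adj v₃ w.1 := fun h => hcommon w.1 hw2 ⟨h1w, h⟩
          have hnadj : ¬ G.Adj w.1 x.1 := by
            rw [hxv3]; intro h; exact hn3w h.symm
          have hn1x : ¬ G.Adj v₁ x.1 := by rw [hxv3]; exact h13
          have hnw3 : ¬ G.Adj w.1 v₃ := by rw [← hxv3]; exact hnadj
          simp [hwv3, hxv3, h1w, hnadj, hn1x, hnw3]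
        · have hn1x : ¬ G.Adj v₁ x.1 := by rw [hxv3]; exact h13
          by_cases hadj : G.Adj w.1 x.1
          · simp [hwv3, hxv3, h1w, hadj, hn1x]
          · simp [hwv3, hxv3, h1w, hadj, hn1x]
      · by_cases hadj : G.Adj w.1 x.1
        · simp [hwv3, hxv3, hadj]
        · simp [hwv3, hxv3, hadj]
  rw [hS]
  simp [Nat.add_comm]
end

section
/- Let B be a signed graph of order n whose underlying graph is bicyclic (connected with exactly n + 1 edges). If B contains a special path, then η(B) ≤ n − 4, i.e. rank(A(B)) ≥ 4. -/
open Classical in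
lemma signedAdj_apply_adj {V : Type*} (G : SimpleGraph V) (σ : V → V → ℝ)
    {u v : V} (h : G.Adj u v) : signedAdj G σ u v = σ u v := by
  simp [signedAdj, h]

open Classical in
lemma signedAdj_apply_not_adj {V : Type*} (G : SimpleGraph V) (σ : V → V → ℝ)
    {u v : V} (h : ¬ G.Adj u v) : signedAdj G σ u v = 0 := by
  simp [signedAdj, h]

open Matrix in
/-- If a signed graph contains an induced path on four vertices, its
adjacency matrix has rank at least 4. -/
lemma rank_ge_four_of_induced_P4 {V : Type*} [Fintype V]
    (G : SimpleGraph V) (σ : V → V → ℝ)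
    (hsgn : ∀ u v, G.Adj u v → σ u v = 1 ∨ σ u v = -1)
    (a b c d : V) (hab : G.Adj a b) (hbc : G.Adj b c) (hcd : G.Adj c d)
    (hac : ¬ G.Adj a c) (had : ¬ G.Adj a d) (hbd : ¬ G.Adj b d) :
    4 ≤ (signedAdj G σ).rank := by
  classical
  set A := signedAdj G σ with hA
  -- the four columns of A at a, b, c, d
  set f : Fin 4 → V := ![a, b, c, d] with hf
  have hne : ∀ u v, G.Adj u v → σ u v ≠ 0 := by
    intro u v h
    rcases hsgn u v h with h' | h' <;> rw [h'] <;> norm_num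
  -- linear independence of the four columns
  have hli : LinearIndependent ℝ (fun i => Aᵀ (f i)) := by
    rw [Fintype.linearIndependent_iff]
    intro g hg
    have h0 := congrFun hg
    simp only [Fin.sum_univ_four, Pi.add_apply, Pi.smul_apply, Pi.zero_apply,
      smul_eq_mul, hf, Matrix.transpose_apply, Matrix.cons_val_zero,
      Matrix.cons_val_one, Matrix.head_cons, Matrix.cons_val_two,
      Matrix.tail_cons, Matrix.cons_val_three] at h0
    have ea := h0 a
    have eb := h0 b
    have ec := h0 c
    have ed := h0 d
    rw [hA] at ea eb ec ed
    rw [signedAdj_apply_not_adj G σ (G.irrefl), signedAdj_apply_adj G σ hab,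
      signedAdj_apply_not_adj G σ hac, signedAdj_apply_not_adj G σ had] at ea
    rw [signedAdj_apply_adj G σ hab.symm, signedAdj_apply_not_adj G σ (G.irrefl),
      signedAdj_apply_adj G σ hbc, signedAdj_apply_not_adj G σ hbd] at eb
    rw [signedAdj_apply_not_adj G σ (fun h => hac h.symm), signedAdj_apply_adj G σ hbc.symm,
      signedAdj_apply_not_adj G σ (G.irrefl), signedAdj_apply_adj G σ hcd] at ec
    rw [signedAdj_apply_not_adj G σ (fun h => had h.symm),
      signedAdj_apply_not_adj G σ (fun h => hbd h.symm),
      signedAdj_apply_adj G σ hcd.symm, signedAdj_apply_not_adj G σ (G.irrefl)] at ed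
    -- from ea : g 1 * σ a b = 0 (after simp), deduce g 1 = 0, etc.
    simp only [mul_zero, zero_add, add_zero, mul_comm] at ea eb ec ed
    have h1 : g 1 = 0 := by
      rcases mul_eq_zero.mp (by linarith [ea] : g 1 * σ a b = 0) with h | h
      · exact h
      · exact absurd h (hne a b hab)
    have h2 : g 2 = 0 := by
      rcases mul_eq_zero.mp (by linarith [ed] : g 2 * σ d c = 0) with h | h
      · exact h
      · exact absurd h (hne d c hcd.symm)
    have h0' : g 0 = 0 := by
      rw [h2] at eb
      rcases mul_eq_zero.mp (by linarith [eb] : g 0 * σ b a = 0) with h | h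
      · exact h
      · exact absurd h (hne b a hab.symm)
    have h3 : g 3 = 0 := by
      rw [h1] at ec
      rcases mul_eq_zero.mp (by linarith [ec] : g 3 * σ c d = 0) with h | h
      · exact h
      · exact absurd h (hne c d hcd)
    intro i
    fin_cases i <;> assumption
  -- conclude on the rank
  rw [Matrix.rank_eq_finrank_span_cols]
  have hmem : ∀ i : Fin 4, Aᵀ (f i) ∈ Submodule.span ℝ (Set.range Aᵀ) :=
    fun i => Submodule.subset_span (Set.mem_range_self _)
  have hli' : LinearIndependent ℝ
      (fun i : Fin 4 => (⟨Aᵀ (f i), hmem i⟩ : Submodule.span ℝ (Set.range Aᵀ))) := by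
    apply LinearIndependent.of_comp (Submodule.span ℝ (Set.range Aᵀ)).subtype
    exact hli
  have := hli'.fintype_card_le_finrank
  simp only [Fintype.card_fin] at this
  exact this

/-- A bicyclic signed graph (connected with `|E| = |V| + 1`) containing a
special path has nullity at most `n - 4`, i.e. `rank A(B) ≥ 4`. -/
theorem rank_ge_four_of_bicyclic_with_special_path
    {V : Type*} [Fintype V] (G : SimpleGraph V) (σ : V → V → ℝ)
    (hsym : ∀ u v, σ u v = σ v u)
    (hsgn : ∀ u v, G.Adj u v → σ u v = 1 ∨ σ u v = -1)
    (hconn : G.Connected)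
    (hbic : G.edgeSet.ncard = Fintype.card V + 1)
    (hsp : ∃ v₁ v₂ v₃ : V, G.Adj v₁ v₂ ∧ G.Adj v₂ v₃ ∧ v₁ ≠ v₃ ∧
      G.neighborSet v₂ = {v₁, v₃} ∧ ¬ G.Adj v₁ v₃ ∧
      ∀ w : V, w ≠ v₂ → ¬ (G.Adj v₁ w ∧ G.Adj v₃ w)) :
    4 ≤ (signedAdj G σ).rank := by
  classical
  obtain ⟨v₁, v₂, v₃, h12, h23, h13ne, hnbr, h13, hcom⟩ := hsp
  have hnbr' : ∀ w, G.Adj v₂ w ↔ w = v₁ ∨ w = v₃ := by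
    intro w
    constructor
    · intro h
      have : w ∈ G.neighborSet v₂ := h
      rw [hnbr] at this
      simpa using this
    · rintro (rfl | rfl)
      · exact h12.symm
      · exact h23
  -- find a fourth vertex adjacent to v₁ or v₃
  by_cases hw : ∃ w, w ∉ ({v₁, v₂, v₃} : Set V) ∧ (G.Adj v₁ w ∨ G.Adj v₃ w)
  · obtain ⟨w, hwS, hadj⟩ := hw
    simp only [Set.mem_insert_iff, Set.mem_singleton_iff, not_or] at hwS
    obtain ⟨hw1, hw2, hw3⟩ := hwS
    rcases hadj with h1w | h3w
    · -- induced path w - v₁ - v₂ - v₃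
      have hwv2 : ¬ G.Adj w v₂ := by
        intro h
        rcases (hnbr' w).mp h.symm with h' | h' <;> [exact hw1 h'; exact hw3 h']
      have hwv3 : ¬ G.Adj w v₃ := by
        intro h
        exact hcom w hw2 ⟨h1w, h.symm⟩
      exact rank_ge_four_of_induced_P4 G σ hsgn w v₁ v₂ v₃ h1w.symm h12 h23 hwv2 hwv3 h13
    · -- induced path v₁ - v₂ - v₃ - w
      have hv2w : ¬ G.Adj v₂ w := by
        intro h
        rcases (hnbr' w).mp h with h' | h' <;> [exact hw1 h'; exact hw3 h']
      have hv1w : ¬ G.Adj v₁ w := by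
        intro h
        exact hcom w hw2 ⟨h, h3w⟩
      exact rank_ge_four_of_induced_P4 G σ hsgn v₁ v₂ v₃ w h12 h23 h3w h13 hv1w hv2w
  · -- otherwise the graph would have only 3 vertices and 2 edges, contradicting bicyclicity
    exfalso
    push_neg at hw
    set S : Set V := {v₁, v₂, v₃} with hS
    have hclosed : ∀ x y, x ∈ S → G.Adj x y → y ∈ S := by
      intro x y hx hxy
      rcases hx with rfl | rfl | rfl
      · by_contra hy
        exact (hw y hy).1 hxy
      · rcases (hnbr' y).mp hxy with rfl | rfl
        · exact Or.inl rfl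
        · exact Or.inr (Or.inr rfl)
      · by_contra hy
        exact (hw y hy).2 hxy
    have hall : ∀ u : V, u ∈ S := by
      intro u
      obtain ⟨p⟩ := hconn.preconnected v₂ u
      have key : ∀ (x u : V) (p : G.Walk x u), x ∈ S → u ∈ S := by
        intro x u p
        induction p with
        | nil => exact fun h => h
        | cons h q ih => exact fun hx => ih (hclosed _ _ hx h)
      exact key v₂ u p (Or.inr (Or.inl rfl))
    have hes : G.edgeSet ⊆ {s(v₁, v₂), s(v₂, v₃)} := by
      intro e he
      induction e with
      | h x y =>
        have hxy : G.Adj x y := he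
        have hx := hall x
        have hy := hall y
        simp only [Set.mem_insert_iff, Set.mem_singleton_iff]
        rcases hx with rfl | rfl | rfl <;> rcases hy with rfl | rfl | rfl
        · exact absurd hxy (G.irrefl)
        · exact Or.inl rfl
        · exact absurd hxy h13
        · exact Or.inl (by rw [Sym2.eq_swap])
        · exact absurd hxy (G.irrefl)
        · exact Or.inr rfl
        · exact absurd hxy.symm h13
        · exact Or.inr (by rw [Sym2.eq_swap])
        · exact absurd hxy (G.irrefl)
    have hcard2 : G.edgeSet.ncard ≤ 2 := by
      refine (Set.ncard_le_ncard hes (Set.toFinite _)).trans ?_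
      exact (Set.ncard_insert_le _ _).trans (by simp)
    have hv3 : 3 ≤ Fintype.card V := by
      have hd12 : v₁ ≠ v₂ := h12.ne
      have hd23 : v₂ ≠ v₃ := h23.ne
      have : ({v₁, v₂, v₃} : Finset V).card = 3 := by
        rw [Finset.card_insert_of_notMem (by simp [hd12, h13ne]),
          Finset.card_insert_of_notMem (by simp [hd23]), Finset.card_singleton]
      rw [← this]
      exact Finset.card_le_univ _
    omega
end

section
/- Let Γ be a signed graph whose underlying graph is a complete bipartite graph. If Γ is unbalanced, then Γ contains an unbalanced cycle of length 4; equivalently, if every 4-cycle of a complete bipartite signed graph is positive, then Γ is balanced. -/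
open Classical in
private lemma key_balanced {V : Type*} (G : SimpleGraph V) (σ : V → V → ℝ)
    (hsym : ∀ u v, σ u v = σ v u)
    (hsgn : ∀ u v, G.Adj u v → σ u v = 1 ∨ σ u v = -1)
    (X Y : Set V) (hdis : Disjoint X Y) (hcover : X ∪ Y = Set.univ)
    (hadj : ∀ u v : V, G.Adj u v ↔ (u ∈ X ∧ v ∈ Y) ∨ (u ∈ Y ∧ v ∈ X))
    (hcon : ∀ a b c d : V, G.Adj a b → G.Adj b c → G.Adj c d → G.Adj d a →
      a ≠ c → b ≠ d → σ a b * σ b c * σ c d * σ d a ≠ -1)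
    (a0 b0 : V) (ha0 : a0 ∈ X) (hb0 : b0 ∈ Y) :
    ∀ (u : V) (c : G.Walk u u), walkSign σ c = 1 := by
  set θ : V → ℝ := fun w => if w ∈ X then σ w b0 else σ a0 w * σ a0 b0 with hθ
  have hXY : ∀ w : V, w ∈ X ∨ w ∈ Y := by
    intro w
    have : w ∈ X ∪ Y := hcover.symm ▸ Set.mem_univ w
    exact this
  have hC : G.Adj a0 b0 := (hadj a0 b0).mpr (Or.inl ⟨ha0, hb0⟩)
  have hsq : ∀ w : V, θ w * θ w = 1 := by
    intro w
    by_cases hw : w ∈ X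
    · have h1 : G.Adj w b0 := (hadj w b0).mpr (Or.inl ⟨hw, hb0⟩)
      simp only [hθ, if_pos hw]
      rcases hsgn w b0 h1 with h | h <;> rw [h] <;> norm_num
    · have hwY : w ∈ Y := (hXY w).resolve_left hw
      have h1 : G.Adj a0 w := (hadj a0 w).mpr (Or.inl ⟨ha0, hwY⟩)
      simp only [hθ, if_neg hw]
      rcases hsgn a0 w h1 with h | h <;> rcases hsgn a0 b0 hC with h' | h' <;>
        rw [h, h'] <;> norm_num
  have hedge : ∀ u v : V, G.Adj u v → σ u v = θ u * θ v := by
    have hmain : ∀ u v : V, u ∈ X → v ∈ Y → G.Adj u v → σ u v = θ u * θ v := by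
      intro u v hu hv huv
      have hvX : v ∉ X := fun h => Set.disjoint_left.mp hdis h hv
      simp only [hθ, if_pos hu, if_neg hvX]
      by_cases hua : u = a0
      · subst hua
        rcases hsgn u b0 hC with h | h <;> rw [h] <;> ring
      · by_cases hvb : v = b0
        · subst hvb
          rcases hsgn a0 v hC with h | h <;> rw [h] <;> ring
        · have h2 : G.Adj v a0 := (hadj v a0).mpr (Or.inr ⟨hv, ha0⟩)
          have h4 : G.Adj b0 u := (hadj b0 u).mpr (Or.inr ⟨hb0, hu⟩)
          have hP := hcon u v a0 b0 huv h2 hC h4 hua hvb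
          rw [hsym u b0, hsym a0 v]
          rcases hsgn u v huv with hA | hA <;> rcases hsgn v a0 h2 with hB | hB <;>
            rcases hsgn a0 b0 hC with hCC | hCC <;> rcases hsgn b0 u h4 with hD | hD <;>
            rw [hA, hB, hCC, hD] at hP ⊢ <;>
            (revert hP; norm_num)
    intro u v huv
    rcases (hadj u v).mp huv with ⟨hu, hv⟩ | ⟨hu, hv⟩
    · exact hmain u v hu hv huv
    · rw [hsym u v, hmain v u hv hu huv.symm, mul_comm]
  have htel : ∀ {x y : V} (p : G.Walk x y), walkSign σ p = θ x * θ y := by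
    intro x y p
    induction p with
    | nil =>
        simp only [walkSign, SimpleGraph.Walk.darts_nil, List.map_nil, List.prod_nil]
        exact (hsq _).symm
    | @cons a b c h p ih =>
        have hstep : walkSign σ (SimpleGraph.Walk.cons h p) = σ a b * walkSign σ p := by
          simp [walkSign]
        rw [hstep, ih, hedge a b h]
        have hb := hsq b
        linear_combination θ a * θ c * hb
  intro u c
  rw [htel c, hsq u]

/-- An unbalanced signed graph whose underlying graph is complete bipartite
(with parts `X`, `Y` partitioning the vertex set) contains an unbalanced
`4`-cycle. -/
theorem unbalanced_complete_bipartite_has_unbalanced_four_cycle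
    {V : Type*} [Fintype V] (G : SimpleGraph V) (σ : V → V → ℝ)
    (hsym : ∀ u v, σ u v = σ v u)
    (hsgn : ∀ u v, G.Adj u v → σ u v = 1 ∨ σ u v = -1)
    (X Y : Set V) (hdis : Disjoint X Y) (hcover : X ∪ Y = Set.univ)
    (hadj : ∀ u v : V, G.Adj u v ↔ (u ∈ X ∧ v ∈ Y) ∨ (u ∈ Y ∧ v ∈ X))
    (hunbal : ¬ IsBalanced G σ) :
    ∃ a b c d : V, G.Adj a b ∧ G.Adj b c ∧ G.Adj c d ∧ G.Adj d a ∧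
      a ≠ c ∧ b ≠ d ∧ σ a b * σ b c * σ c d * σ d a = -1 := by
  by_contra hcon
  push_neg at hcon
  apply hunbal
  intro u c hc
  cases c with
  | nil => exact absurd rfl hc.ne_nil
  | @cons _ v _ h p =>
    rcases (hadj u v).mp h with ⟨hu, hv⟩ | ⟨hu, hv⟩
    · exact key_balanced G σ hsym hsgn X Y hdis hcover hadj hcon u v hu hv u
        (SimpleGraph.Walk.cons h p)
    · have hcover' : Y ∪ X = Set.univ := by rw [Set.union_comm]; exact hcover
      have hadj' : ∀ u v : V, G.Adj u v ↔ (u ∈ Y ∧ v ∈ X) ∨ (u ∈ X ∧ v ∈ Y) :=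
        fun u v => (hadj u v).trans or_comm
      exact key_balanced G σ hsym hsgn Y X hdis.symm hcover' hadj' hcon u v hu hv u
        (SimpleGraph.Walk.cons h p)
end

section
/- Let B be an unbalanced signed graph of order n whose underlying graph is bicyclic (connected with exactly n + 1 edges), and suppose B has nullity n − 4 and contains a pendant vertex u with neighbor v. Then the signed graph B − u − v obtained by deleting u and v is the disjoint union of a balanced complete bipartite signed graph and some isolated vertices; in particular, the underlying graph of the non-isolated part of B − u − v is a star, a 4-cycle, or the complete bipartite graph K_{2,3}. -/
section AuxLemmas

open Matrix Module Submodule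

theorem aux_walkSign_eq {V : Type*} {G : SimpleGraph V} (σ : V → V → ℝ) (θ : V → ℝ)
    (hθ : ∀ a, θ a * θ a = 1) (h : ∀ a b, G.Adj a b → σ a b = θ a * θ b) :
    ∀ {a b : V} (p : G.Walk a b), walkSign σ p = θ a * θ b := by
  intro a b p
  induction p with
  | nil => simp [walkSign, hθ]
  | cons had q ih =>
    rename_i x y z
    simp only [walkSign, SimpleGraph.Walk.darts_cons, List.map_cons, List.prod_cons] at *
    rw [ih, h _ _ had, show θ x * θ y * (θ y * θ z) = θ x * (θ y * θ y) * θ z from by ring,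
      hθ y, mul_one]

lemma aux_range_pair {α : Type*} (f g : α → ℝ) : Set.range ![f, g] = {f, g} := by
  ext h
  simp only [Set.mem_range, Fin.exists_fin_two, Matrix.cons_val_zero, Matrix.cons_val_one,
    Matrix.head_cons, Set.mem_insert_iff, Set.mem_singleton_iff]
  constructor
  · rintro (h | h)
    · exact Or.inl h.symm
    · exact Or.inr h.symm
  · rintro (h | h)
    · exact Or.inl h.symm
    · exact Or.inr h.symm

theorem aux_rank_pendant {V : Type*} [Fintype V] [DecidableEq V] (A : Matrix V V ℝ)
    (u v : V) (huv : u ≠ v)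
    (hsymm : ∀ i j, A i j = A j i)
    (hu : ∀ w, w ≠ v → A u w = 0) (hs : A u v ≠ 0) (hvv : A v v = 0) :
    A.rank = 2 + (A.submatrix (fun w : {w : V // w ≠ u ∧ w ≠ v} => (w : V))
      (fun w : {w : V // w ≠ u ∧ w ≠ v} => (w : V))).rank := by
  set s : ℝ := A u v with hsdef
  have huu : A u u = 0 := hu u huv
  have hAu : ∀ i, i ≠ v → A i u = 0 := fun i hi => by rw [hsymm]; exact hu i hi
  have hAvu : A v u = s := hsymm v u
  set B : Matrix {w : V // w ≠ u ∧ w ≠ v} {w : V // w ≠ u ∧ w ≠ v} ℝ :=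
    A.submatrix (fun w => (w : V)) (fun w => (w : V)) with hBdef
  -- the congruence matrix
  set c : V → ℝ := fun i => if i ≠ u ∧ i ≠ v then -(A i v) * s⁻¹ else 0 with hcdef
  have hcu : c u = 0 := by simp [hcdef]
  have hcv : c v = 0 := by simp [hcdef]
  have hcS : ∀ i, i ≠ u → i ≠ v → c i = -(A i v) * s⁻¹ := by
    intro i h1 h2; simp [hcdef, h1, h2]
  set N : Matrix V V ℝ := Matrix.of (fun i j => if j = u then c i else 0) with hNdef
  have hNN : N * N = 0 := by
    ext i j
    rw [Matrix.mul_apply]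
    apply Finset.sum_eq_zero
    intro k _
    by_cases hk : k = u
    · subst hk
      simp [hNdef, hcu]
    · simp [hNdef, hk]
  have hEF : (1 + N) * (1 - N) = 1 := by
    rw [mul_sub, mul_one, add_mul, one_mul, hNN, add_zero]
    abel
  have hdetE : IsUnit (1 + N).det := by
    apply IsUnit.of_mul_eq_one (1 - N).det
    rw [← Matrix.det_mul, hEF, Matrix.det_one]
  have hdetET : IsUnit (1 + N)ᵀ.det := by rwa [Matrix.det_transpose]
  set M : Matrix V V ℝ := (1 + N) * A * (1 + N)ᵀ with hMdef
  have hrank : M.rank = A.rank := by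
    rw [hMdef, Matrix.rank_mul_eq_left_of_isUnit_det _ _ hdetET,
      Matrix.rank_mul_eq_right_of_isUnit_det _ _ hdetE]
  -- entry formula
  have hEA : ∀ i k, ((1 + N) * A) i k = A i k + c i * A u k := by
    intro i k
    rw [Matrix.add_mul, Matrix.one_mul, Matrix.add_apply]
    congr 1
    rw [Matrix.mul_apply, Finset.sum_eq_single u]
    · simp [hNdef]
    · intro b _ hb; simp [hNdef, hb]
    · intro h; exact absurd (Finset.mem_univ u) h
  have hM : ∀ i j, M i j = A i j + c i * A u j + c j * A i u := by
    intro i j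
    rw [hMdef, Matrix.mul_apply]
    have h1 : ∀ k, ((1 + N) * A) i k * (1 + N)ᵀ k j
        = (if k = j then (A i k + c i * A u k) else 0)
          + (if k = u then (A i k + c i * A u k) * c j else 0) := by
      intro k
      have hT : (1 + N)ᵀ k j = (if j = k then (1:ℝ) else 0) + (if k = u then c j else 0) := by
        rw [Matrix.transpose_apply, Matrix.add_apply, Matrix.one_apply]
        simp only [hNdef, Matrix.of_apply]
      rw [hEA, hT, mul_add]
      congr 1
      · by_cases hk : k = j
        · subst hk; simp
        · rw [if_neg (fun h : j = k => hk h.symm), if_neg hk, mul_zero]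
      · by_cases hk : k = u
        · subst hk; simp
        · rw [if_neg hk, if_neg hk, mul_zero]
    rw [Finset.sum_congr rfl (fun k _ => h1 k), Finset.sum_add_distrib,
      Finset.sum_ite_eq' Finset.univ j, Finset.sum_ite_eq' Finset.univ u]
    simp only [Finset.mem_univ, if_true]
    rw [huu]
    ring
  -- entries of M
  have hMcol_u : ∀ i, M i u = if i = v then s else 0 := by
    intro i
    rw [hM, huu, mul_zero, add_zero, hcu, zero_mul, add_zero]
    by_cases hi : i = v
    · subst hi; rw [hAvu, if_pos rfl]
    · rw [hAu i hi, if_neg hi]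
  have hMrow_u : ∀ j, M u j = if j = v then s else 0 := by
    intro j
    rw [hM, hcu, zero_mul, add_zero, huu, mul_zero, add_zero]
    by_cases hj : j = v
    · subst hj; rw [if_pos rfl]
    · rw [hu j hj, if_neg hj]
  have hMcol_v : ∀ i, M i v = if i = u then s else 0 := by
    intro i
    rw [hM, hcv, zero_mul, add_zero, ← hsdef]
    by_cases hi : i = u
    · subst hi; rw [hcu, zero_mul, add_zero, if_pos rfl, hsdef]
    · by_cases hi' : i = v
      · subst hi'
        rw [hvv, hcv, zero_mul, add_zero, if_neg (Ne.symm huv)]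
      · rw [hcS i hi hi', if_neg hi, neg_mul, neg_mul, mul_assoc,
          inv_mul_cancel₀ hs, mul_one, add_neg_cancel]
  have hMrow_v : ∀ j, j ≠ u → j ≠ v → M v j = 0 := by
    intro j hj1 hj2
    rw [hM, hcv, zero_mul, add_zero, hAvu, hcS j hj1 hj2, hsymm v j, neg_mul, neg_mul,
      mul_assoc, inv_mul_cancel₀ hs, mul_one, add_neg_cancel]
  have hMS : ∀ i j, (hi1 : i ≠ u) → (hi2 : i ≠ v) → (hj1 : j ≠ u) → (hj2 : j ≠ v) →
      M i j = B ⟨i, hi1, hi2⟩ ⟨j, hj1, hj2⟩ := by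
    intro i j hi1 hi2 hj1 hj2
    rw [hM, hu j hj2, hAu i hi2]
    simp [hBdef]
  -- extension by zero
  set φ : ({w : V // w ≠ u ∧ w ≠ v} → ℝ) →ₗ[ℝ] (V → ℝ) :=
    { toFun := fun x i => if h : i ≠ u ∧ i ≠ v then x ⟨i, h⟩ else 0,
      map_add' := by
        intro x y; funext i; by_cases h : i ≠ u ∧ i ≠ v <;> simp [h]
      map_smul' := by
        intro r x; funext i; by_cases h : i ≠ u ∧ i ≠ v <;> simp [h] } with hφdef
  have hφval : ∀ (x : ({w : V // w ≠ u ∧ w ≠ v} → ℝ)) (w : {w : V // w ≠ u ∧ w ≠ v}),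
      φ x (w : V) = x w := by
    intro x w
    show (if h : (w : V) ≠ u ∧ (w : V) ≠ v then x ⟨(w : V), h⟩ else 0) = x w
    rw [dif_pos w.2]
  have hφu : ∀ x, φ x u = 0 := by intro x; show dite _ _ _ = (0:ℝ); simp
  have hφv : ∀ x, φ x v = 0 := by intro x; show dite _ _ _ = (0:ℝ); simp
  have hφinj : Function.Injective φ := by
    intro x y hxy
    funext w
    have := congrFun hxy (w : V)
    rwa [hφval, hφval] at this
  set P : Submodule ℝ (V → ℝ) := span ℝ {Mᵀ u, Mᵀ v} with hPdef
  set Q : Submodule ℝ (V → ℝ) := Submodule.map φ (span ℝ (Set.range Bᵀ)) with hQdef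
  have hcols : ∀ (w : {w : V // w ≠ u ∧ w ≠ v}), Mᵀ (w : V) = φ (Bᵀ w) := by
    intro w
    funext i
    rw [Matrix.transpose_apply]
    by_cases hi1 : i = u
    · subst hi1
      rw [hMrow_u, if_neg w.2.2, hφu]
    · by_cases hi2 : i = v
      · subst hi2
        rw [hMrow_v _ w.2.1 w.2.2, hφv]
      · rw [hMS i w hi1 hi2 w.2.1 w.2.2]
        have : φ (Bᵀ w) i = Bᵀ w ⟨i, hi1, hi2⟩ := by
          show dite _ _ _ = _
          rw [dif_pos ⟨hi1, hi2⟩]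
        rw [this, Matrix.transpose_apply]
  have hspan : span ℝ (Set.range Mᵀ) = P ⊔ Q := by
    apply le_antisymm
    · rw [span_le]
      rintro _ ⟨w, rfl⟩
      by_cases hw1 : w = u
      · subst hw1
        exact Submodule.mem_sup_left (subset_span (Set.mem_insert _ _))
      · by_cases hw2 : w = v
        · subst hw2
          exact Submodule.mem_sup_left (subset_span (Set.mem_insert_of_mem _ rfl))
        · apply Submodule.mem_sup_right
          rw [show w = ((⟨w, hw1, hw2⟩ : {w : V // w ≠ u ∧ w ≠ v}) : V) from rfl, hcols]
          exact Submodule.mem_map_of_mem (subset_span ⟨_, rfl⟩)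
    · apply sup_le
      · rw [span_le]
        rintro f hf
        rcases hf with rfl | rfl
        · exact subset_span ⟨u, rfl⟩
        · exact subset_span ⟨v, rfl⟩
      · rw [hQdef, Submodule.map_span, span_le]
        rintro _ ⟨_, ⟨w, rfl⟩, rfl⟩
        rw [← hcols w]
        exact subset_span ⟨w, rfl⟩
  have hMvu : M v u = s := by rw [hMcol_u, if_pos rfl]
  have hMuu : M u u = 0 := by rw [hMcol_u, if_neg huv]
  have hMuv : M u v = s := by rw [hMcol_v, if_pos rfl]
  have hMvv : M v v = 0 := by rw [hMcol_v, if_neg (Ne.symm huv)]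
  have hPQ : P ⊓ Q = ⊥ := by
    rw [eq_bot_iff]
    intro f hf
    rw [Submodule.mem_inf] at hf
    obtain ⟨hfP, hfQ⟩ := hf
    rw [hQdef] at hfQ
    obtain ⟨x, _, rfl⟩ := Submodule.mem_map.1 hfQ
    rw [hPdef, Submodule.mem_span_pair] at hfP
    obtain ⟨α, β, hαβ⟩ := hfP
    have h1 := congrFun hαβ v
    have h2 := congrFun hαβ u
    simp only [Pi.add_apply, Pi.smul_apply, Matrix.transpose_apply, smul_eq_mul] at h1 h2
    rw [hMvu, hMvv, hφv] at h1
    rw [hMuu, hMuv, hφu] at h2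
    have hα : α = 0 := by
      rcases mul_eq_zero.1 (by linarith [h1] : α * s = 0) with h | h
      · exact h
      · exact absurd h hs
    have hβ : β = 0 := by
      rcases mul_eq_zero.1 (by linarith [h2] : β * s = 0) with h | h
      · exact h
      · exact absurd h hs
    have : φ x = 0 := by
      rw [← hαβ, hα, hβ]
      simp
    rw [this]
    exact Submodule.zero_mem ⊥
  have hfinP : finrank ℝ P = 2 := by
    have li : LinearIndependent ℝ ![Mᵀ u, Mᵀ v] := by
      rw [LinearIndependent.pair_iff]
      intro α β hab
      have h1 := congrFun hab v
      have h2 := congrFun hab u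
      simp only [Pi.add_apply, Pi.smul_apply, Matrix.transpose_apply, smul_eq_mul,
        Pi.zero_apply] at h1 h2
      rw [hMvu, hMvv] at h1
      rw [hMuu, hMuv] at h2
      constructor
      · rcases mul_eq_zero.1 (by linarith [h1] : α * s = 0) with h | h
        · exact h
        · exact absurd h hs
      · rcases mul_eq_zero.1 (by linarith [h2] : β * s = 0) with h | h
        · exact h
        · exact absurd h hs
    rw [hPdef, ← aux_range_pair (Mᵀ u) (Mᵀ v), finrank_span_eq_card li, Fintype.card_fin]
  have hfinQ : finrank ℝ Q = B.rank := by
    rw [hQdef, ← LinearEquiv.finrank_eq (Submodule.equivMapOfInjective φ hφinj _),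
      Matrix.rank_eq_finrank_span_cols]
    rfl
  rw [← hrank, Matrix.rank_eq_finrank_span_cols, Matrix.col, hspan]
  have h := Submodule.finrank_sup_add_finrank_inf_eq P Q
  rw [hPQ, finrank_bot, add_zero, hfinP, hfinQ, hBdef] at h
  exact h

theorem aux_rank_two {W : Type*} [Fintype W] [DecidableEq W] (M : Matrix W W ℝ)
    (hsymm : ∀ i j, M i j = M j i) (hdiag : ∀ i, M i i = 0)
    (hent : ∀ i j, M i j = 0 ∨ M i j = 1 ∨ M i j = -1)
    (hrk : M.rank = 2) :
    ∃ (X Y : Set W) (θ : W → ℝ), X.Nonempty ∧ Y.Nonempty ∧ Disjoint X Y ∧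
      (∀ i j, M i j ≠ 0 ↔ (i ∈ X ∧ j ∈ Y) ∨ (i ∈ Y ∧ j ∈ X)) ∧
      (∀ i, θ i = 1 ∨ θ i = -1) ∧ (∀ i j, M i j ≠ 0 → M i j = θ i * θ j) := by
  -- find a nonzero entry
  have hM0 : M ≠ 0 := by
    rintro rfl; rw [Matrix.rank_zero] at hrk; omega
  obtain ⟨x, y, hxy⟩ : ∃ x y, M x y ≠ 0 := by
    by_contra hc; push_neg at hc; exact hM0 (by ext i j; exact hc i j)
  set s : ℝ := M x y with hs
  have hyx : M y x = s := hsymm y x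
  have hs2 : s * s = 1 := by
    rcases hent x y with h | h | h
    · exact absurd h hxy
    · rw [hs, h]; norm_num
    · rw [hs, h]; norm_num
  have li : LinearIndependent ℝ ![Mᵀ x, Mᵀ y] := by
    rw [LinearIndependent.pair_iff]
    intro α β hab
    have h1 := congrFun hab y
    have h2 := congrFun hab x
    simp [Matrix.transpose_apply, hdiag, hyx, ← hs] at h1 h2
    constructor
    · rcases h1 with h1 | h1
      · exact h1
      · exact absurd (hyx ▸ h1) (by rw [hyx]; exact hxy)
    · rcases h2 with h2 | h2
      · exact h2
      · exact absurd h2 hxy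
  have hle : span ℝ (Set.range ![Mᵀ x, Mᵀ y]) ≤ span ℝ (Set.range Mᵀ) := by
    apply span_le.2
    rintro _ ⟨i, rfl⟩
    fin_cases i <;> exact subset_span ⟨_, rfl⟩
  have hspan : span ℝ (Set.range Mᵀ) = span ℝ (Set.range ![Mᵀ x, Mᵀ y]) := by
    refine (Submodule.eq_of_le_of_finrank_le hle ?_).symm
    rw [finrank_span_eq_card li, ← Matrix.col, ← Matrix.rank_eq_finrank_span_cols, hrk, Fintype.card_fin]
  have hrange : Set.range ![Mᵀ x, Mᵀ y] = {Mᵀ x, Mᵀ y} := by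
    ext f
    simp only [Set.mem_range, Fin.exists_fin_two, Matrix.cons_val_zero, Matrix.cons_val_one,
      Matrix.head_cons, Set.mem_insert_iff, Set.mem_singleton_iff]
    constructor
    · rintro (h | h)
      · exact Or.inl h.symm
      · exact Or.inr h.symm
    · rintro (h | h)
      · exact Or.inl h.symm
      · exact Or.inr h.symm
  -- coefficients
  have hmem : ∀ w, ∃ α β : ℝ, α • Mᵀ x + β • Mᵀ y = Mᵀ w := by
    intro w
    have h : Mᵀ w ∈ span ℝ (Set.range Mᵀ) := subset_span ⟨w, rfl⟩
    rw [hspan, hrange] at h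
    exact Submodule.mem_span_pair.1 h
  choose fa fb hab using hmem
  have key : ∀ w i, fa w * M i x + fb w * M i y = M i w := by
    intro w i
    have := congrFun (hab w) i
    simpa using this
  have k1 : ∀ w, fa w * s = M y w := by
    intro w; have := key w y; rwa [hyx, hdiag, mul_zero, add_zero] at this
  have k2 : ∀ w, fb w * s = M x w := by
    intro w; have := key w x; rwa [hdiag, mul_zero, zero_add] at this
  have k3 : ∀ w, fa w * fb w = 0 := by
    intro w
    have h := key w w
    have hwx : M w x = fb w * s := by rw [k2, hsymm]
    have hwy : M w y = fa w * s := by rw [k1, hsymm]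
    rw [hwx, hwy, hdiag] at h
    linear_combination (s / 2) * h - (fa w * fb w) * hs2
  -- the matrix entry formula
  have kform : ∀ i j, M i j = fa j * (fb i * s) + fb j * (fa i * s) := by
    intro i j
    have h := key j i
    rw [show M i x = fb i * s by rw [k2, hsymm], show M i y = fa i * s by rw [k1, hsymm]] at h
    linarith [h]
  have hsval : s = 1 ∨ s = -1 := by
    rcases hent x y with h | h | h
    · exact absurd (hs.trans h) hxy
    · exact Or.inl (hs.trans h)
    · exact Or.inr (hs.trans h)
  set θ : W → ℝ := fun w => if fa w ≠ 0 then fa w else if fb w ≠ 0 then fb w * s else 1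
    with hθdef
  have hθ1 : ∀ w, fa w ≠ 0 → θ w = fa w := by
    intro w h; simp only [hθdef]; rw [if_pos h]
  have hθ2 : ∀ w, fa w = 0 → fb w ≠ 0 → θ w = fb w * s := by
    intro w h h'
    simp only [hθdef]
    rw [if_neg (by simp [h]), if_pos h']
  have hθ3 : ∀ w, fa w = 0 → fb w = 0 → θ w = 1 := by
    intro w h h'
    simp only [hθdef]
    rw [if_neg (by simp [h]), if_neg (by simp [h'])]
  -- helper: decompose nonzero entries
  have hterm : ∀ i j, M i j ≠ 0 →
      (fa i ≠ 0 ∧ fb j ≠ 0 ∧ fa j = 0 ∧ fb i = 0) ∨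
      (fb i ≠ 0 ∧ fa j ≠ 0 ∧ fa i = 0 ∧ fb j = 0) := by
    intro i j hne
    have h2 : fa j * (fb i * s) ≠ 0 ∨ fb j * (fa i * s) ≠ 0 := by
      by_contra hc
      push_neg at hc
      rw [kform i j, hc.1, hc.2, add_zero] at hne
      exact hne rfl
    rcases h2 with h | h
    · right
      have hfaj : fa j ≠ 0 := fun h0 => h (by rw [h0, zero_mul])
      have hfbi : fb i ≠ 0 := fun h0 => h (by rw [h0, zero_mul, mul_zero])
      have hfai : fa i = 0 := by
        rcases mul_eq_zero.1 (k3 i) with h' | h'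
        · exact h'
        · exact absurd h' hfbi
      have hfbj : fb j = 0 := by
        rcases mul_eq_zero.1 (k3 j) with h' | h'
        · exact absurd h' hfaj
        · exact h'
      exact ⟨hfbi, hfaj, hfai, hfbj⟩
    · left
      have hfbj : fb j ≠ 0 := fun h0 => h (by rw [h0, zero_mul])
      have hfai : fa i ≠ 0 := fun h0 => h (by rw [h0, zero_mul, mul_zero])
      have hfbi : fb i = 0 := by
        rcases mul_eq_zero.1 (k3 i) with h' | h'
        · exact absurd h' hfai
        · exact h'
      have hfaj : fa j = 0 := by
        rcases mul_eq_zero.1 (k3 j) with h' | h'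
        · exact h'
        · exact absurd h' hfbj
      exact ⟨hfai, hfbj, hfaj, hfbi⟩
  refine ⟨{w | fa w ≠ 0}, {w | fb w ≠ 0}, θ, ⟨x, ?_⟩, ⟨y, ?_⟩, ?_, ?_, ?_, ?_⟩
  · -- fa x ≠ 0
    simp only [Set.mem_setOf_eq]
    intro h0
    rw [← hyx] at hxy
    rw [← k1 x, h0, zero_mul] at hxy
    exact hxy rfl
  · -- fb y ≠ 0
    simp only [Set.mem_setOf_eq]
    intro h0
    rw [hs] at hxy
    rw [← k2 y, h0, zero_mul] at hxy
    exact hxy rfl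
  · rw [Set.disjoint_left]
    intro w hw hw'
    simp only [Set.mem_setOf_eq] at hw hw'
    rcases mul_eq_zero.1 (k3 w) with h | h
    · exact hw h
    · exact hw' h
  · -- adjacency iff
    intro i j
    simp only [Set.mem_setOf_eq]
    constructor
    · intro hne
      rcases hterm i j hne with ⟨h1, h2, _, _⟩ | ⟨h1, h2, _, _⟩
      · exact Or.inl ⟨h1, h2⟩
      · exact Or.inr ⟨h1, h2⟩
    · rintro (⟨hi, hj⟩ | ⟨hi, hj⟩)
      · have hfaj : fa j = 0 := by
          rcases mul_eq_zero.1 (k3 j) with h' | h'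
          · exact h'
          · exact absurd h' hj
        have hfbi : fb i = 0 := by
          rcases mul_eq_zero.1 (k3 i) with h' | h'
          · exact absurd h' hi
          · exact h'
        rw [kform i j, hfaj, hfbi]
        intro hc
        simp only [zero_mul, mul_zero, zero_add, add_zero] at hc
        rcases mul_eq_zero.1 hc with h' | h'
        · exact hj h'
        · rcases mul_eq_zero.1 h' with h'' | h''
          · exact hi h''
          · exact hxy (hs ▸ h'')
      · have hfai : fa i = 0 := by
          rcases mul_eq_zero.1 (k3 i) with h' | h'
          · exact h'
          · exact absurd h' hi
        have hfbj : fb j = 0 := by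
          rcases mul_eq_zero.1 (k3 j) with h' | h'
          · exact absurd h' hj
          · exact h'
        rw [kform i j, hfai, hfbj]
        intro hc
        simp only [zero_mul, mul_zero, zero_add, add_zero] at hc
        rcases mul_eq_zero.1 hc with h' | h'
        · exact hj h'
        · rcases mul_eq_zero.1 h' with h'' | h''
          · exact hi h''
          · exact hxy (hs ▸ h'')
  · -- θ values are ±1
    intro w
    by_cases hfa : fa w ≠ 0
    · rw [hθ1 w hfa]
      have h1 := k1 w
      have hMyw : M y w ≠ 0 := by
        intro h0
        rw [h0] at h1
        rcases mul_eq_zero.1 h1 with h | h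
        · exact hfa h
        · exact hxy h
      have hfaval : fa w = M y w * s := by
        have h2 : fa w * (s * s) = M y w * s := by rw [← mul_assoc, h1]
        rwa [hs2, mul_one] at h2
      rcases hent y w with h | h | h
      · exact absurd h hMyw
      · rcases hsval with h' | h'
        · left; rw [hfaval, h, h', mul_one]
        · right; rw [hfaval, h, h', one_mul]
      · rcases hsval with h' | h'
        · right; rw [hfaval, h, h', mul_one]
        · left; rw [hfaval, h, h']; norm_num
    · push_neg at hfa
      by_cases hfb : fb w ≠ 0
      · rw [hθ2 w hfa hfb]
        have h2 := k2 w
        have hMxw : M x w ≠ 0 := by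
          intro h0
          rw [h0] at h2
          rcases mul_eq_zero.1 h2 with h | h
          · exact hfb h
          · exact hxy h
        rw [h2]
        rcases hent x w with h | h | h
        · exact absurd h hMxw
        · exact Or.inl h
        · exact Or.inr h
      · push_neg at hfb
        rw [hθ3 w hfa hfb]
        exact Or.inl rfl
  · -- factorization
    intro i j hne
    rcases hterm i j hne with ⟨h1, h2, h3, h4⟩ | ⟨h1, h2, h3, h4⟩
    · -- fa i ≠ 0, fb j ≠ 0, fa j = 0, fb i = 0
      rw [hθ1 i h1, hθ2 j h3 h2, kform i j, h3, h4]
      ring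
    · -- fb i ≠ 0, fa j ≠ 0, fa i = 0, fb j = 0
      rw [hθ2 i h3 h1, hθ1 j h2, kform i j, h3, h4]
      ring

theorem aux_arith (a b : ℕ) (ha : 1 ≤ a) (hb : 1 ≤ b) (hab : a * b ≤ a + b + 1) :
    (a = 1 ∨ b = 1) ∨ (a = 2 ∧ b = 2) ∨ (a = 2 ∧ b = 3) ∨ (a = 3 ∧ b = 2) := by
  by_cases ha1 : a = 1
  · exact Or.inl (Or.inl ha1)
  by_cases hb1 : b = 1
  · exact Or.inl (Or.inr hb1)
  have ha2 : 2 ≤ a := by omega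
  have hb2 : 2 ≤ b := by omega
  have ha3 : a ≤ 3 := by
    by_contra h
    have h4 : 4 ≤ a := by omega
    have m1 : 4 * b ≤ a * b := Nat.mul_le_mul h4 (le_refl b)
    have m2 : a * 2 ≤ a * b := Nat.mul_le_mul (le_refl a) hb2
    generalize hP : a * b = p at hab m1 m2
    omega
  have hb3 : b ≤ 3 := by
    by_contra h
    have h4 : 4 ≤ b := by omega
    have m1 : a * 4 ≤ a * b := Nat.mul_le_mul (le_refl a) h4
    have m2 : 2 * b ≤ a * b := Nat.mul_le_mul ha2 (le_refl b)
    generalize hP : a * b = p at hab m1 m2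
    omega
  interval_cases a <;> interval_cases b <;> omega

theorem aux_count {V : Type*} [Fintype V] (G : SimpleGraph V) (u v : V)
    (hadj_u : ∀ w, G.Adj u w ↔ w = v)
    (X Y : Set {w : V // w ≠ u ∧ w ≠ v})
    (hXne : X.Nonempty) (hYne : Y.Nonempty) (hdisj : Disjoint X Y)
    (hGiff : ∀ a b : {w : V // w ≠ u ∧ w ≠ v},
      G.Adj ↑a ↑b ↔ (a ∈ X ∧ b ∈ Y) ∨ (a ∈ Y ∧ b ∈ X))
    (hconn : G.Connected)
    (hbic : G.edgeSet.ncard = Fintype.card V + 1) :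
    (X.ncard = 1 ∨ Y.ncard = 1) ∨ (X.ncard = 2 ∧ Y.ncard = 2) ∨
      (X.ncard = 2 ∧ Y.ncard = 3) ∨ (X.ncard = 3 ∧ Y.ncard = 2) := by
  classical
  have hadjuv : G.Adj u v := (hadj_u v).2 rfl
  have huv : u ≠ v := hadjuv.ne
  set Xs : Set V := Subtype.val '' X with hXs
  set Ys : Set V := Subtype.val '' Y with hYs
  have hXsub : ∀ w, w ∈ Xs → w ≠ u ∧ w ≠ v := by rintro _ ⟨a, _, rfl⟩; exact a.2
  have hYsub : ∀ w, w ∈ Ys → w ≠ u ∧ w ≠ v := by rintro _ ⟨a, _, rfl⟩; exact a.2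
  have hnadj : ∀ w, w ≠ v → ¬ G.Adj w u := by
    intro w hw hadj
    exact hw ((hadj_u w).1 hadj.symm)
  set Xf : Finset V := Finset.univ.filter (· ∈ Xs) with hXf
  set Yf : Finset V := Finset.univ.filter (· ∈ Ys) with hYf
  set Tf : Finset V := Finset.univ.filter (fun w => w ≠ u ∧ w ≠ v ∧ w ∉ Xs ∧ w ∉ Ys) with hTf
  set Sf : Finset V := Finset.univ.filter (fun w => w ≠ u ∧ w ≠ v) with hSf
  -- neighbor finset of a vertex in Xs
  have hnbrX : ∀ w, w ∈ Xs → G.neighborFinset w = Yf ∪ (if G.Adj v w then {v} else ∅) := by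
    rintro _ ⟨a, haX, rfl⟩
    ext z
    rw [SimpleGraph.mem_neighborFinset, Finset.mem_union, hYf, Finset.mem_filter]
    constructor
    · intro hz
      by_cases hz1 : z = u
      · subst hz1
        exact absurd hz (hnadj _ a.2.2)
      · by_cases hz2 : z = v
        · subst hz2
          right
          rw [if_pos hz.symm]
          exact Finset.mem_singleton.2 rfl
        · left
          refine ⟨Finset.mem_univ z, ?_⟩
          rcases (hGiff a ⟨z, hz1, hz2⟩).1 hz with ⟨h1, h2⟩ | ⟨h1, h2⟩
          · exact ⟨⟨z, hz1, hz2⟩, h2, rfl⟩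
          · exact absurd h1 (Set.disjoint_left.1 hdisj haX)
    · intro hz
      rcases hz with ⟨_, hb⟩ | hz
      · obtain ⟨b, hbY, rfl⟩ := hb
        exact (hGiff a b).2 (Or.inl ⟨haX, hbY⟩)
      · by_cases hav : G.Adj v ↑a
        · rw [if_pos hav] at hz
          rw [Finset.mem_singleton] at hz
          subst hz
          exact hav.symm
        · rw [if_neg hav] at hz
          exact absurd hz (Finset.notMem_empty _)
  have hnbrY : ∀ w, w ∈ Ys → G.neighborFinset w = Xf ∪ (if G.Adj v w then {v} else ∅) := by
    rintro _ ⟨a, haY, rfl⟩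
    ext z
    rw [SimpleGraph.mem_neighborFinset, Finset.mem_union, hXf, Finset.mem_filter]
    constructor
    · intro hz
      by_cases hz1 : z = u
      · subst hz1
        exact absurd hz (hnadj _ a.2.2)
      · by_cases hz2 : z = v
        · subst hz2
          right
          rw [if_pos hz.symm]
          exact Finset.mem_singleton.2 rfl
        · left
          refine ⟨Finset.mem_univ z, ?_⟩
          rcases (hGiff a ⟨z, hz1, hz2⟩).1 hz with ⟨h1, h2⟩ | ⟨h1, h2⟩
          · exact absurd haY (Set.disjoint_left.1 hdisj h1)
          · exact ⟨⟨z, hz1, hz2⟩, h2, rfl⟩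
    · intro hz
      rcases hz with ⟨_, hb⟩ | hz
      · obtain ⟨b, hbX, rfl⟩ := hb
        exact (hGiff a b).2 (Or.inr ⟨haY, hbX⟩)
      · by_cases hav : G.Adj v ↑a
        · rw [if_pos hav] at hz
          rw [Finset.mem_singleton] at hz
          subst hz
          exact hav.symm
        · rw [if_neg hav] at hz
          exact absurd hz (Finset.notMem_empty _)
  -- vertices outside X, Y : only neighbor is v
  have hTsub : ∀ w, w ≠ u → w ≠ v → w ∉ Xs → w ∉ Ys → ∀ z, G.Adj w z → z = v := by
    intro w hw1 hw2 hwx hwy z hz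
    by_contra hz2
    have hz1 : z ≠ u := by
      intro h
      subst h
      exact hnadj w hw2 hz
    rcases (hGiff ⟨w, hw1, hw2⟩ ⟨z, hz1, hz2⟩).1 hz with ⟨h1, _⟩ | ⟨h1, _⟩
    · exact hwx ⟨⟨w, hw1, hw2⟩, h1, rfl⟩
    · exact hwy ⟨⟨w, hw1, hw2⟩, h1, rfl⟩
  have hTadj : ∀ w, w ≠ u → w ≠ v → w ∉ Xs → w ∉ Ys → G.Adj w v := by
    intro w hw1 hw2 hwx hwy
    obtain ⟨p⟩ := hconn.preconnected w u
    cases p with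
    | nil => exact absurd rfl hw1
    | cons h q =>
      have := hTsub w hw1 hw2 hwx hwy _ h
      subst this
      exact h
  have hnbrT : ∀ w, w ≠ u → w ≠ v → w ∉ Xs → w ∉ Ys → G.neighborFinset w = {v} := by
    intro w hw1 hw2 hwx hwy
    ext z
    rw [SimpleGraph.mem_neighborFinset, Finset.mem_singleton]
    constructor
    · exact hTsub w hw1 hw2 hwx hwy z
    · rintro rfl
      exact hTadj w hw1 hw2 hwx hwy
  -- degrees
  have hdegu : G.degree u = 1 := by
    have h : G.neighborFinset u = {v} := by
      ext z
      rw [SimpleGraph.mem_neighborFinset, Finset.mem_singleton]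
      exact hadj_u z
    rw [← SimpleGraph.card_neighborFinset_eq_degree, h, Finset.card_singleton]
  have hdegv : G.degree v = 1 + (Sf.filter (fun w => G.Adj v w)).card := by
    have h : G.neighborFinset v = insert u (Sf.filter (fun w => G.Adj v w)) := by
      ext z
      rw [SimpleGraph.mem_neighborFinset, Finset.mem_insert, Finset.mem_filter, hSf,
        Finset.mem_filter]
      constructor
      · intro hz
        by_cases hz1 : z = u
        · exact Or.inl hz1
        · right
          exact ⟨⟨Finset.mem_univ z, hz1, (Ne.symm hz.ne)⟩, hz⟩
      · rintro (rfl | ⟨_, hz⟩)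
        · exact hadjuv.symm
        · exact hz
    have hu : u ∉ Sf.filter (fun w => G.Adj v w) := by
      rw [Finset.mem_filter, hSf, Finset.mem_filter]
      rintro ⟨⟨_, h1, _⟩, _⟩
      exact h1 rfl
    rw [← SimpleGraph.card_neighborFinset_eq_degree, h, Finset.card_insert_of_notMem hu]
    omega
  have hvYf : v ∉ Yf := by
    rw [hYf, Finset.mem_filter]
    rintro ⟨_, hv⟩
    exact (hYsub v hv).2 rfl
  have hvXf : v ∉ Xf := by
    rw [hXf, Finset.mem_filter]
    rintro ⟨_, hv⟩
    exact (hXsub v hv).2 rfl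
  have hdegX : ∀ w ∈ Xf, G.degree w = Yf.card + (if G.Adj v w then 1 else 0) := by
    intro w hw
    rw [hXf, Finset.mem_filter] at hw
    rw [← SimpleGraph.card_neighborFinset_eq_degree, hnbrX w hw.2]
    have hd : Disjoint Yf (if G.Adj v w then ({v} : Finset V) else ∅) := by
      by_cases h : G.Adj v w
      · rw [if_pos h, Finset.disjoint_singleton_right]
        exact hvYf
      · rw [if_neg h]
        exact Finset.disjoint_empty_right _
    rw [Finset.card_union_of_disjoint hd]
    congr 1
    by_cases h : G.Adj v w
    · rw [if_pos h, if_pos h, Finset.card_singleton]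
    · rw [if_neg h, if_neg h, Finset.card_empty]
  have hdegY : ∀ w ∈ Yf, G.degree w = Xf.card + (if G.Adj v w then 1 else 0) := by
    intro w hw
    rw [hYf, Finset.mem_filter] at hw
    rw [← SimpleGraph.card_neighborFinset_eq_degree, hnbrY w hw.2]
    have hd : Disjoint Xf (if G.Adj v w then ({v} : Finset V) else ∅) := by
      by_cases h : G.Adj v w
      · rw [if_pos h, Finset.disjoint_singleton_right]
        exact hvXf
      · rw [if_neg h]
        exact Finset.disjoint_empty_right _
    rw [Finset.card_union_of_disjoint hd]
    congr 1
    by_cases h : G.Adj v w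
    · rw [if_pos h, if_pos h, Finset.card_singleton]
    · rw [if_neg h, if_neg h, Finset.card_empty]
  have hdegT : ∀ w ∈ Tf, G.degree w = 1 := by
    intro w hw
    rw [hTf, Finset.mem_filter] at hw
    obtain ⟨_, h1, h2, h3, h4⟩ := hw
    rw [← SimpleGraph.card_neighborFinset_eq_degree, hnbrT w h1 h2 h3 h4,
      Finset.card_singleton]
  -- sums
  have hsumX : ∑ w ∈ Xf, G.degree w
      = Xf.card * Yf.card + (Xf.filter (fun w => G.Adj v w)).card := by
    rw [Finset.sum_congr rfl hdegX, Finset.sum_add_distrib, Finset.sum_const, smul_eq_mul]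
    congr 1
    rw [Finset.sum_boole, Nat.cast_id]
  have hsumY : ∑ w ∈ Yf, G.degree w
      = Yf.card * Xf.card + (Yf.filter (fun w => G.Adj v w)).card := by
    rw [Finset.sum_congr rfl hdegY, Finset.sum_add_distrib, Finset.sum_const, smul_eq_mul]
    congr 1
    rw [Finset.sum_boole, Nat.cast_id]
  have hsumT : ∑ w ∈ Tf, G.degree w = Tf.card := by
    rw [Finset.sum_congr rfl hdegT, Finset.sum_const, smul_eq_mul, mul_one]
  -- partition of Sf
  have hdXY : Disjoint Xf Yf := by
    rw [Finset.disjoint_left]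
    intro w hw1 hw2
    rw [hXf, Finset.mem_filter] at hw1
    rw [hYf, Finset.mem_filter] at hw2
    obtain ⟨a, haX, rfl⟩ := hw1.2
    obtain ⟨b, hbY, hb⟩ := hw2.2
    have : b = a := Subtype.ext hb
    subst this
    exact Set.disjoint_left.1 hdisj haX hbY
  have hdXYT : Disjoint (Xf ∪ Yf) Tf := by
    rw [Finset.disjoint_left]
    intro w hw1 hw2
    rw [hTf, Finset.mem_filter] at hw2
    rw [Finset.mem_union, hXf, hYf, Finset.mem_filter, Finset.mem_filter] at hw1
    rcases hw1 with ⟨_, h⟩ | ⟨_, h⟩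
    · exact hw2.2.2.2.1 h
    · exact hw2.2.2.2.2 h
  have hSfsplit : Sf = (Xf ∪ Yf) ∪ Tf := by
    ext w
    rw [hSf, Finset.mem_filter, Finset.mem_union, Finset.mem_union, hXf, hYf, hTf,
      Finset.mem_filter, Finset.mem_filter, Finset.mem_filter]
    constructor
    · rintro ⟨hu', h1, h2⟩
      by_cases hx : w ∈ Xs
      · exact Or.inl (Or.inl ⟨hu', hx⟩)
      · by_cases hy : w ∈ Ys
        · exact Or.inl (Or.inr ⟨hu', hy⟩)
        · exact Or.inr ⟨hu', h1, h2, hx, hy⟩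
    · rintro ((⟨hu', h⟩ | ⟨hu', h⟩) | ⟨hu', h1, h2, _, _⟩)
      · exact ⟨hu', hXsub w h⟩
      · exact ⟨hu', hYsub w h⟩
      · exact ⟨hu', h1, h2⟩
  -- filter of Sf by adjacency to v
  have hdS : (Sf.filter (fun w => G.Adj v w)).card
      = (Xf.filter (fun w => G.Adj v w)).card + (Yf.filter (fun w => G.Adj v w)).card
        + Tf.card := by
    have hd1 := Finset.disjoint_filter_filter (p := fun w => G.Adj v w)
      (q := fun w => G.Adj v w) hdXYT
    rw [Finset.filter_union] at hd1
    have hd2 := Finset.disjoint_filter_filter (p := fun w => G.Adj v w)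
      (q := fun w => G.Adj v w) hdXY
    have hTfilter : Finset.filter (fun w => G.Adj v w) Tf = Tf := by
      rw [Finset.filter_eq_self]
      intro w hw
      rw [hTf, Finset.mem_filter] at hw
      exact (hTadj w hw.2.1 hw.2.2.1 hw.2.2.2.1 hw.2.2.2.2).symm
    rw [hSfsplit, Finset.filter_union, Finset.filter_union,
      Finset.card_union_of_disjoint hd1, Finset.card_union_of_disjoint hd2, hTfilter]
  -- univ split
  have hduvS : Disjoint ({u, v} : Finset V) Sf := by
    rw [Finset.disjoint_left]
    intro w hw1 hw2
    rw [Finset.mem_insert, Finset.mem_singleton] at hw1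
    rw [hSf, Finset.mem_filter] at hw2
    rcases hw1 with rfl | rfl
    · exact hw2.2.1 rfl
    · exact hw2.2.2 rfl
  have huniv : (Finset.univ : Finset V) = ({u, v} : Finset V) ∪ Sf := by
    ext w
    simp only [Finset.mem_univ, true_iff, Finset.mem_union, Finset.mem_insert,
      Finset.mem_singleton, hSf, Finset.mem_filter, true_and]
    by_cases h1 : w = u
    · exact Or.inl (Or.inl h1)
    · by_cases h2 : w = v
      · exact Or.inl (Or.inr h2)
      · exact Or.inr ⟨h1, h2⟩
  have hcardV : Fintype.card V = 2 + Sf.card := by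
    rw [← Finset.card_univ, huniv, Finset.card_union_of_disjoint hduvS, Finset.card_pair huv]
  have hSfcard : Sf.card = Xf.card + Yf.card + Tf.card := by
    rw [hSfsplit, Finset.card_union_of_disjoint hdXYT, Finset.card_union_of_disjoint hdXY]
  -- edges count
  have hedge : G.edgeFinset.card = Fintype.card V + 1 := by
    rw [SimpleGraph.edgeFinset_card, ← Nat.card_eq_fintype_card, Nat.card_coe_set_eq, hbic]
  -- handshake
  have hhs := SimpleGraph.sum_degrees_eq_twice_card_edges G
  rw [huniv, Finset.sum_union hduvS, Finset.sum_pair huv, hSfsplit,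
    Finset.sum_union hdXYT, Finset.sum_union hdXY, hsumX, hsumY, hsumT, hdegu, hdegv,
    hedge] at hhs
  -- k ≥ 1
  have hkge : 1 ≤ (Xf.filter (fun w => G.Adj v w)).card
      + (Yf.filter (fun w => G.Adj v w)).card := by
    by_contra h0
    push_neg at h0
    have hXe : (Xf.filter (fun w => G.Adj v w)) = ∅ := by
      apply Finset.card_eq_zero.1
      omega
    have hYe : (Yf.filter (fun w => G.Adj v w)) = ∅ := by
      apply Finset.card_eq_zero.1
      omega
    have hno : ∀ w, w ∈ Xs ∪ Ys → ¬ G.Adj v w := by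
      intro w hw hadj
      rcases hw with hw | hw
      · have : w ∈ Xf.filter (fun w => G.Adj v w) := by
          rw [Finset.mem_filter, hXf, Finset.mem_filter]
          exact ⟨⟨Finset.mem_univ w, hw⟩, hadj⟩
        rw [hXe] at this
        exact absurd this (Finset.notMem_empty _)
      · have : w ∈ Yf.filter (fun w => G.Adj v w) := by
          rw [Finset.mem_filter, hYf, Finset.mem_filter]
          exact ⟨⟨Finset.mem_univ w, hw⟩, hadj⟩
        rw [hYe] at this
        exact absurd this (Finset.notMem_empty _)
    have hclosed : ∀ p q : V, p ∈ Xs ∪ Ys → G.Adj p q → q ∈ Xs ∪ Ys := by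
      intro p q hp hpq
      have hpS : p ≠ u ∧ p ≠ v := by
        rcases hp with hp | hp
        · exact hXsub p hp
        · exact hYsub p hp
      by_cases hq1 : q = u
      · subst hq1
        exact absurd hpq (hnadj p hpS.2)
      · by_cases hq2 : q = v
        · subst hq2
          exact absurd hpq.symm (hno p hp)
        · rcases (hGiff ⟨p, hpS⟩ ⟨q, hq1, hq2⟩).1 hpq with ⟨_, h2⟩ | ⟨_, h2⟩
          · exact Or.inr ⟨⟨q, hq1, hq2⟩, h2, rfl⟩
          · exact Or.inl ⟨⟨q, hq1, hq2⟩, h2, rfl⟩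
    have hwalk : ∀ (p q : V), G.Walk p q → p ∈ Xs ∪ Ys → q ∈ Xs ∪ Ys := by
      intro p q wk
      induction wk with
      | nil => exact id
      | cons h _ ih => exact fun hp => ih (hclosed _ _ hp h)
    obtain ⟨x₀, hx₀⟩ := hXne
    obtain ⟨p⟩ := hconn.preconnected ↑x₀ u
    have hu' : u ∈ Xs ∪ Ys := hwalk _ _ p (Or.inl ⟨x₀, hx₀, rfl⟩)
    rcases hu' with h | h
    · exact (hXsub u h).1 rfl
    · exact (hYsub u h).1 rfl
  -- cardinal identifications
  have hXcard : X.ncard = Xf.card := by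
    rw [← Set.ncard_image_of_injective X Subtype.val_injective, ← hXs,
      Set.ncard_eq_toFinset_card']
    congr 1
    ext w
    rw [Set.mem_toFinset, hXf, Finset.mem_filter]
    exact ⟨fun h => ⟨Finset.mem_univ w, h⟩, fun h => h.2⟩
  have hYcard : Y.ncard = Yf.card := by
    rw [← Set.ncard_image_of_injective Y Subtype.val_injective, ← hYs,
      Set.ncard_eq_toFinset_card']
    congr 1
    ext w
    rw [Set.mem_toFinset, hYf, Finset.mem_filter]
    exact ⟨fun h => ⟨Finset.mem_univ w, h⟩, fun h => h.2⟩
  have hXpos : 1 ≤ Xf.card := by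
    obtain ⟨a, ha⟩ := hXne
    apply Finset.card_pos.2
    exact ⟨↑a, by rw [hXf, Finset.mem_filter]; exact ⟨Finset.mem_univ _, a, ha, rfl⟩⟩
  have hYpos : 1 ≤ Yf.card := by
    obtain ⟨a, ha⟩ := hYne
    apply Finset.card_pos.2
    exact ⟨↑a, by rw [hYf, Finset.mem_filter]; exact ⟨Finset.mem_univ _, a, ha, rfl⟩⟩
  -- final arithmetic
  rw [hXcard, hYcard]
  apply aux_arith _ _ hXpos hYpos
  rw [hdS] at hhs
  rw [hcardV, hSfcard] at hhs
  have hcomm : Yf.card * Xf.card = Xf.card * Yf.card := Nat.mul_comm _ _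
  rw [hcomm] at hhs
  generalize hP : Xf.card * Yf.card = p at hhs ⊢
  omega

end AuxLemmas

/-- Let `B` be an unbalanced bicyclic signed graph of order `n` with nullity
`n - 4`, containing a pendant vertex `u` whose unique neighbor is `v`.  Then
`B - u - v` is a balanced complete bipartite signed graph (with parts `X`, `Y`)
together with some isolated vertices, and the underlying graph of its
non-isolated part is a star, a `4`-cycle, or `K_{2,3}`. -/
theorem unbalanced_bicyclic_nullity_sub_four_pendant_structure
    {V : Type*} [Fintype V] (G : SimpleGraph V) (σ : V → V → ℝ)
    (hsym : ∀ u v, σ u v = σ v u)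
    (hsgn : ∀ u v, G.Adj u v → σ u v = 1 ∨ σ u v = -1)
    (hconn : G.Connected)
    (hbic : G.edgeSet.ncard = Fintype.card V + 1)
    (hunbal : ¬ IsBalanced G σ)
    (hnull : Fintype.card V - (signedAdj G σ).rank = Fintype.card V - 4)
    (u v : V) (hpend : G.neighborSet u = {v}) :
    ∃ X Y : Set ↥{w : V | w ≠ u ∧ w ≠ v},
      X.Nonempty ∧ Y.Nonempty ∧ Disjoint X Y ∧
      (∀ a b : ↥{w : V | w ≠ u ∧ w ≠ v},
        (G.induce {w : V | w ≠ u ∧ w ≠ v}).Adj a b ↔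
          (a ∈ X ∧ b ∈ Y) ∨ (a ∈ Y ∧ b ∈ X)) ∧
      IsBalanced (G.induce {w : V | w ≠ u ∧ w ≠ v}) (fun a b => σ a.1 b.1) ∧
      ((X.ncard = 1 ∨ Y.ncard = 1) ∨
        (X.ncard = 2 ∧ Y.ncard = 2) ∨
        (X.ncard = 2 ∧ Y.ncard = 3) ∨ (X.ncard = 3 ∧ Y.ncard = 2)) := by
  classical
  have hadj_u : ∀ w, G.Adj u w ↔ w = v := by
    intro w
    constructor
    · intro h
      have h' : w ∈ G.neighborSet u := h
      rw [hpend] at h'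
      exact h'
    · intro hw
      have h' : w ∈ G.neighborSet u := by
        rw [hpend, Set.mem_singleton_iff]
        exact hw
      exact h'
  have hadjuv : G.Adj u v := (hadj_u v).2 rfl
  have huv : u ≠ v := hadjuv.ne
  have hAdef : ∀ i j, signedAdj G σ i j = if G.Adj i j then σ i j else 0 := fun _ _ => rfl
  have hAsymm : ∀ i j, signedAdj G σ i j = signedAdj G σ j i := by
    intro i j
    rw [hAdef, hAdef]
    by_cases h : G.Adj i j
    · rw [if_pos h, if_pos h.symm, hsym]
    · rw [if_neg h, if_neg (fun h' => h h'.symm)]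
  have hAne : ∀ i j, signedAdj G σ i j ≠ 0 ↔ G.Adj i j := by
    intro i j
    rw [hAdef]
    by_cases h : G.Adj i j
    · rw [if_pos h]
      simp only [h, iff_true]
      rcases hsgn i j h with h' | h' <;> rw [h'] <;> norm_num
    · rw [if_neg h]
      simp [h]
  have hAent : ∀ i j, signedAdj G σ i j = 0 ∨ signedAdj G σ i j = 1 ∨
      signedAdj G σ i j = -1 := by
    intro i j
    rw [hAdef]
    by_cases h : G.Adj i j
    · rw [if_pos h]
      rcases hsgn i j h with h' | h' <;> rw [h'] <;> simp
    · rw [if_neg h]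
      exact Or.inl rfl
  have hAu : ∀ w, w ≠ v → signedAdj G σ u w = 0 := by
    intro w hw
    rw [hAdef, if_neg (fun h => hw ((hadj_u w).1 h))]
  have hAuv : signedAdj G σ u v ≠ 0 := (hAne u v).2 hadjuv
  have hAvv : signedAdj G σ v v = 0 := by rw [hAdef, if_neg (G.irrefl)]
  -- order at least 4
  have hedge : G.edgeFinset.card = Fintype.card V + 1 := by
    rw [SimpleGraph.edgeFinset_card, ← Nat.card_eq_fintype_card, Nat.card_coe_set_eq, hbic]
  have hn4 : 4 ≤ Fintype.card V := by
    have h2 := SimpleGraph.card_edgeFinset_le_card_choose_two (G := G)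
    rw [hedge] at h2
    by_contra hlt
    push_neg at hlt
    have hle3 : Fintype.card V ≤ 3 := by omega
    have hch := Nat.choose_le_choose 2 hle3
    norm_num at hch
    have hle2 : Fintype.card V ≤ 2 := by omega
    have hch2 := Nat.choose_le_choose 2 hle2
    norm_num at hch2
    have hle1 : Fintype.card V ≤ 1 := by omega
    have hch1 := Nat.choose_le_choose 2 hle1
    norm_num at hch1
    omega
  have hrk4 : (signedAdj G σ).rank = 4 := by
    have hle := Matrix.rank_le_card_width (signedAdj G σ)
    omega
  have hrkP := aux_rank_pendant (signedAdj G σ) u v huv hAsymm hAu hAuv hAvv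
  rw [hrk4] at hrkP
  have hrkB : ((signedAdj G σ).submatrix (fun w : {w : V // w ≠ u ∧ w ≠ v} => (w : V))
      (fun w : {w : V // w ≠ u ∧ w ≠ v} => (w : V))).rank = 2 := by omega
  obtain ⟨X, Y, θ, hXne, hYne, hdisj, hiff, hθpm, hθfac⟩ :=
    aux_rank_two ((signedAdj G σ).submatrix (fun w : {w : V // w ≠ u ∧ w ≠ v} => (w : V))
        (fun w : {w : V // w ≠ u ∧ w ≠ v} => (w : V)))
      (fun i j => hAsymm ↑i ↑j)
      (fun i => by
        rw [Matrix.submatrix_apply, hAdef, if_neg (G.irrefl)])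
      (fun i j => hAent ↑i ↑j) hrkB
  have hGiff : ∀ a b : {w : V // w ≠ u ∧ w ≠ v},
      G.Adj ↑a ↑b ↔ (a ∈ X ∧ b ∈ Y) ∨ (a ∈ Y ∧ b ∈ X) := by
    intro a b
    rw [← hAne ↑a ↑b]
    exact hiff a b
  have hcount := aux_count G u v hadj_u X Y hXne hYne hdisj hGiff hconn hbic
  have hθ2 : ∀ a, θ a * θ a = 1 := by
    intro a
    rcases hθpm a with h | h <;> rw [h] <;> norm_num
  have hbal : IsBalanced (G.induce {w : V | w ≠ u ∧ w ≠ v}) (fun a b => σ a.1 b.1) := by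
    have hfac : ∀ a b : ↥{w : V | w ≠ u ∧ w ≠ v},
        (G.induce {w : V | w ≠ u ∧ w ≠ v}).Adj a b → σ a.1 b.1 = θ a * θ b := by
      intro a b hab
      have hadj : G.Adj ↑a ↑b := hab
      have hBab : ((signedAdj G σ).submatrix
          (fun w : {w : V // w ≠ u ∧ w ≠ v} => (w : V))
          (fun w : {w : V // w ≠ u ∧ w ≠ v} => (w : V))) a b ≠ 0 := by
        rw [Matrix.submatrix_apply]
        exact (hAne _ _).2 hadj
      have h1 := hθfac a b hBab
      rw [Matrix.submatrix_apply, hAdef, if_pos hadj] at h1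
      exact h1
    intro w c _
    rw [aux_walkSign_eq (V := ↥{w : V | w ≠ u ∧ w ≠ v})
      (G := G.induce {w : V | w ≠ u ∧ w ≠ v}) (fun a b => σ a.1 b.1) θ hθ2 hfac c]
    exact hθ2 w
  exact ⟨X, Y, hXne, hYne, hdisj, fun a b => hGiff a b, hbal, hcount⟩
end
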